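/- arXiv:1912.09243 — 3 statements merged into one kernel-verified Lean document; each statement's English description precedes it below -/
import Mathlib

section
/- Let V be a complex representation of S_n that is multiplicity-free (each irreducible representation of S_n occurs at most once in V). Then every vector belonging to a one-dimensional Gelfand-Tsetlin subspace of V (an intersection of isotypic components for the chain S_1 ⊂ S_2 ⊂ ... ⊂ S_n) is a simultaneous eigenvector of all the Jucys-Murphy operators J_1, ..., J_n acting on V. -/
open Finset

/-- A submodule is invariant under the restriction of `ρ` to the subgroup `H`. -/
def RepInvariant {G : Type*} [Group G] {V : Type*} [AddCommGroup V] [Module ℂ V]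
    (ρ : Representation ℂ G V) (H : Subgroup G) (p : Submodule ℂ V) : Prop :=
  ∀ g ∈ H, ∀ v ∈ p, ρ g v ∈ p

/-- A nonzero `H`-invariant submodule with no proper nonzero invariant submodule:
an irreducible subrepresentation of the restriction of `ρ` to `H`. -/
def IsSimpleSubrep {G : Type*} [Group G] {V : Type*} [AddCommGroup V] [Module ℂ V]
    (ρ : Representation ℂ G V) (H : Subgroup G) (p : Submodule ℂ V) : Prop :=
  RepInvariant ρ H p ∧ p ≠ ⊥ ∧
    ∀ q : Submodule ℂ V, RepInvariant ρ H q → q ≤ p → q = ⊥ ∨ q = p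

/-- Two submodules are isomorphic as representations of `H`. -/
def SubrepIso {G : Type*} [Group G] {V : Type*} [AddCommGroup V] [Module ℂ V]
    (ρ : Representation ℂ G V) (H : Subgroup G) (p q : Submodule ℂ V) : Prop :=
  ∃ e : p ≃ₗ[ℂ] q, ∀ g ∈ H, ∀ v w : p, (w : V) = ρ g v → ((e w : V) = ρ g (e v))

/-- `W` is an isotypic component of `V` under the restriction of `ρ` to `H`:
the sum of all irreducible subrepresentations isomorphic to some fixed irreducible. -/
def IsIsotypicComponent {G : Type*} [Group G] {V : Type*} [AddCommGroup V] [Module ℂ V]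
    (ρ : Representation ℂ G V) (H : Subgroup G) (W : Submodule ℂ V) : Prop :=
  ∃ p, IsSimpleSubrep ρ H p ∧
    W = sSup {q | IsSimpleSubrep ρ H q ∧ SubrepIso ρ H p q}

/-- The subgroup `S_i ⊆ S_n` of permutations fixing every point with (0-based)
index `≥ i`. -/
def fixSub (n i : ℕ) : Subgroup (Equiv.Perm (Fin n)) where
  carrier := {σ | ∀ x : Fin n, i ≤ (x : ℕ) → σ x = x}
  one_mem' := fun _ _ => rfl
  mul_mem' := by
    intro a b ha hb x hx
    have h1 := hb x hx
    have h2 := ha x hx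
    simp only [Set.mem_setOf_eq] at *
    calc (a * b) x = a (b x) := rfl
      _ = a x := by rw [h1]
      _ = x := h2
  inv_mem' := by
    intro a ha x hx
    have h := ha x hx
    simp only [Set.mem_setOf_eq] at *
    calc a⁻¹ x = a⁻¹ (a x) := by rw [h]
      _ = x := by simp

section Aux
variable {G : Type*} [Group G] {V : Type*} [AddCommGroup V] [Module ℂ V]
  (ρ : Representation ℂ G V) (H : Subgroup G)

lemma subrepIso_trans {p q r : Submodule ℂ V} (h1 : SubrepIso ρ H p q)
    (h2 : SubrepIso ρ H q r) : SubrepIso ρ H p r := by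
  obtain ⟨e1, he1⟩ := h1
  obtain ⟨e2, he2⟩ := h2
  refine ⟨e1.trans e2, fun g hg v w hw => ?_⟩
  simpa using he2 g hg (e1 v) (e1 w) (he1 g hg v w hw)

lemma simple_map (f : V →ₗ[ℂ] V) (hf : ∀ g ∈ H, ∀ v : V, f (ρ g v) = ρ g (f v))
    {q : Submodule ℂ V} (hq : IsSimpleSubrep ρ H q) :
    Submodule.map f q = ⊥ ∨
      (IsSimpleSubrep ρ H (Submodule.map f q) ∧ SubrepIso ρ H q (Submodule.map f q)) := by
  obtain ⟨hinv, hne, hmin⟩ := hq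
  have hKinv : RepInvariant ρ H (q ⊓ LinearMap.ker f) := by
    intro g hg v hv
    refine ⟨hinv g hg v hv.1, LinearMap.mem_ker.mpr ?_⟩
    rw [hf g hg v, LinearMap.mem_ker.mp hv.2, map_zero]
  rcases hmin _ hKinv inf_le_left with hK | hK
  · right
    have hinj : Function.Injective (f ∘ₗ q.subtype) := by
      intro x y hxy
      have hmem : ((x - y : q) : V) ∈ q ⊓ LinearMap.ker f := by
        rw [Submodule.mem_inf]
        refine ⟨(x - y).2, LinearMap.mem_ker.mpr ?_⟩
        simp only [Submodule.coe_sub, map_sub]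
        simp only [LinearMap.comp_apply, Submodule.coe_subtype] at hxy
        rw [hxy, sub_self]
      rw [hK, Submodule.mem_bot] at hmem
      have : (x - y : q) = 0 := Subtype.ext hmem
      exact sub_eq_zero.mp this
    have hrange : LinearMap.range (f ∘ₗ q.subtype) = Submodule.map f q := by
      rw [LinearMap.range_comp, Submodule.range_subtype]
    let e : (q : Submodule ℂ V) ≃ₗ[ℂ] Submodule.map f q :=
      (LinearEquiv.ofInjective _ hinj).trans (LinearEquiv.ofEq _ _ hrange)
    have he : ∀ x : q, (e x : V) = f x := by
      intro x
      simp [e, LinearEquiv.trans_apply]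
    have hne' : Submodule.map f q ≠ ⊥ := by
      intro h0
      have hle : q ≤ LinearMap.ker f := by
        intro v hv
        have : f v ∈ Submodule.map f q := ⟨v, hv, rfl⟩
        rw [h0, Submodule.mem_bot] at this
        exact this
      exact hne (by rw [← hK]; exact (inf_eq_left.mpr hle).symm)
    have hinv' : RepInvariant ρ H (Submodule.map f q) := by
      rintro g hg v ⟨u, hu, rfl⟩
      exact ⟨ρ g u, hinv g hg u hu, hf g hg u⟩
    constructor
    · refine ⟨hinv', hne', ?_⟩
      intro r hr hrle
      have hr' : RepInvariant ρ H (q ⊓ Submodule.comap f r) := by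
        intro g hg v hv
        refine ⟨hinv g hg v hv.1, ?_⟩
        have := hr g hg _ hv.2
        simpa [Submodule.mem_comap, hf g hg v] using this
      have hmap : Submodule.map f (q ⊓ Submodule.comap f r) = r := by
        apply le_antisymm
        · rintro x ⟨v, ⟨_, hv2⟩, rfl⟩; exact hv2
        · intro x hx
          obtain ⟨v, hv, rfl⟩ := hrle hx
          exact ⟨v, ⟨hv, hx⟩, rfl⟩
      rcases hmin _ hr' inf_le_left with h | h
      · left; rw [← hmap, h, Submodule.map_bot]
      · right; rw [← hmap, h]
    · refine ⟨e, fun g hg v w hw => ?_⟩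
      calc (e w : V) = f w := he w
        _ = f (ρ g v) := by rw [hw]
        _ = ρ g (f v) := hf g hg v
        _ = ρ g (e v) := by rw [he v]
  · left
    rw [Submodule.eq_bot_iff]
    rintro x ⟨v, hv, rfl⟩
    have hv2 : v ∈ q := hv
    rw [← hK] at hv2
    exact LinearMap.mem_ker.mp (Submodule.mem_inf.mp hv2).2
end Aux

section Aux2
variable {G : Type*} [Group G] {V : Type*} [AddCommGroup V] [Module ℂ V]
  (ρ : Representation ℂ G V) (H : Subgroup G)

lemma isotypic_invariant {W : Submodule ℂ V} (hW : IsIsotypicComponent ρ H W) :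
    RepInvariant ρ H W := by
  obtain ⟨p, _hp, rfl⟩ := hW
  intro g hg v hv
  have h : sSup {q | IsSimpleSubrep ρ H q ∧ SubrepIso ρ H p q}
      ≤ Submodule.comap (ρ g) (sSup {q | IsSimpleSubrep ρ H q ∧ SubrepIso ρ H p q}) := by
    refine sSup_le fun q hq w hw => Submodule.mem_comap.mpr ?_
    exact le_sSup hq (hq.1.1 g hg w hw)
  exact h hv

lemma isotypic_map_le {W : Submodule ℂ V} (hW : IsIsotypicComponent ρ H W)
    (f : V →ₗ[ℂ] V) (hf : ∀ g ∈ H, ∀ v : V, f (ρ g v) = ρ g (f v)) :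
    Submodule.map f W ≤ W := by
  obtain ⟨p, _hp, rfl⟩ := hW
  conv_lhs => rw [sSup_eq_iSup', Submodule.map_iSup]
  apply iSup_le
  rintro ⟨q, hq, hiso⟩
  rcases simple_map ρ H f hf hq with h | ⟨hs, hi⟩
  · rw [h]; exact bot_le
  · have hmem2 : Submodule.map f q ∈ {q | IsSimpleSubrep ρ H q ∧ SubrepIso ρ H p q} :=
      ⟨hs, subrepIso_trans ρ H hiso hi⟩
    exact le_sSup hmem2

end Aux2

lemma mem_fixSub {n j : ℕ} {σ : Equiv.Perm (Fin n)} :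
    σ ∈ fixSub n j ↔ ∀ x : Fin n, j ≤ (x : ℕ) → σ x = x := Iff.rfl

lemma glt {n j : ℕ} {g : Equiv.Perm (Fin n)} (hg : g ∈ fixSub n j)
    {i l : Fin n} (hj : j ≤ (i : ℕ)) (hl : l < i) : g l < i := by
  by_cases h : j ≤ (l : ℕ)
  · rw [hg l h]; exact hl
  · push_neg at h
    have h2 : ((g l : Fin n) : ℕ) < j := by
      by_contra h3
      push_neg at h3
      have h4 := (fixSub n j).inv_mem hg (g l) h3
      rw [Equiv.Perm.inv_def, Equiv.symm_apply_apply] at h4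
      rw [← h4] at h3
      omega
    exact Fin.lt_def.mpr (lt_of_lt_of_le h2 hj)

lemma swap_mem_fixSub {n : ℕ} {i l : Fin n} {j : ℕ} (hl : l < i) (hij : (i : ℕ) < j) :
    Equiv.swap l i ∈ fixSub n j := by
  intro x hx
  have hl' : (l : ℕ) < (i : ℕ) := hl
  refine Equiv.swap_apply_of_ne_of_ne (Fin.ne_of_val_ne ?_) (Fin.ne_of_val_ne ?_) <;> omega

lemma jm_comm {n : ℕ} {V : Type*} [AddCommGroup V] [Module ℂ V]
    (ρ : Representation ℂ (Equiv.Perm (Fin n)) V)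
    (i : Fin n) {j : ℕ} (hj : j ≤ (i : ℕ)) {g : Equiv.Perm (Fin n)}
    (hg : g ∈ fixSub n j) (v : V) :
    (∑ l ∈ Finset.univ.filter (fun l => l < i), ρ (Equiv.swap l i)) (ρ g v)
      = ρ g ((∑ l ∈ Finset.univ.filter (fun l => l < i), ρ (Equiv.swap l i)) v) := by
  have key : ∀ l : Fin n, g * Equiv.swap l i = Equiv.swap (g l) i * g := by
    intro l
    have h := Equiv.swap_apply_apply g l i
    rw [hg i hj] at h
    rw [h, inv_mul_cancel_right]
  have hmem : ∀ l : Fin n, l < i ↔ g l < i := by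
    intro l
    constructor
    · exact fun h => glt hg hj h
    · intro h
      have h2 := glt ((fixSub n j).inv_mem hg) hj h
      rwa [Equiv.Perm.inv_def, Equiv.symm_apply_apply] at h2
  rw [LinearMap.sum_apply, LinearMap.sum_apply, map_sum]
  have lhs : ∀ l : Fin n, (ρ (Equiv.swap l i)) ((ρ g) v) = ρ (Equiv.swap l i * g) v := by
    intro l; rw [map_mul]; rfl
  have rhs : ∀ l : Fin n, (ρ g) ((ρ (Equiv.swap l i)) v) = ρ (Equiv.swap (g l) i * g) v := by
    intro l; rw [← key, map_mul]; rfl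
  simp only [lhs, rhs]
  exact (Finset.sum_equiv g (by intro l; simpa using hmem l) (fun l _ => rfl)).symm

/-- Let `V` be a multiplicity-free complex representation of `S_n` (any two isomorphic
irreducible subrepresentations coincide).  Every vector of a one-dimensional
Gelfand-Tsetlin subspace of `V` — an intersection `⨅ i, W i` where `W i` is an isotypic
component of `V` as a representation of the subgroup `S_{i+1}` of the chain
`S_1 ⊂ ⋯ ⊂ S_n` — is a simultaneous eigenvector of all the Jucys-Murphy operators
`J_1, …, J_n` acting on `V`. -/
theorem gt_vector_eigenvector_of_jucys_murphy
    {n : ℕ} {V : Type*} [AddCommGroup V] [Module ℂ V]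
    (ρ : Representation ℂ (Equiv.Perm (Fin n)) V)
    (hmf : ∀ p q : Submodule ℂ V, IsSimpleSubrep ρ ⊤ p → IsSimpleSubrep ρ ⊤ q →
      SubrepIso ρ ⊤ p q → p = q)
    (W : Fin n → Submodule ℂ V)
    (hW : ∀ i : Fin n, IsIsotypicComponent ρ (fixSub n ((i : ℕ) + 1)) (W i))
    (hdim : Module.finrank ℂ ↥(⨅ i, W i) = 1)
    (b : V) (hb : b ∈ ⨅ i, W i) :
    ∀ i : Fin n, ∃ c : ℂ,
      (∑ l ∈ Finset.univ.filter (fun l => l < i), ρ (Equiv.swap l i)) b = c • b := by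
  intro i
  set T : V →ₗ[ℂ] V := ∑ l ∈ Finset.univ.filter (fun l => l < i), ρ (Equiv.swap l i) with hT
  have hTb : T b ∈ ⨅ j, W j := by
    rw [Submodule.mem_iInf] at hb ⊢
    intro j
    rcases le_or_gt (i : ℕ) (j : ℕ) with hij | hij
    · have hinv := isotypic_invariant _ _ (hW j)
      rw [hT, LinearMap.sum_apply]
      apply Submodule.sum_mem
      intro l hl
      have hl' : l < i := (Finset.mem_filter.mp hl).2
      exact hinv _ (swap_mem_fixSub hl' (by omega)) b (hb j)
    · have hcomm : ∀ g ∈ fixSub n ((j : ℕ) + 1), ∀ v : V, T (ρ g v) = ρ g (T v) := by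
        intro g hg v
        rw [hT]
        exact jm_comm ρ i (by omega) hg v
      exact isotypic_map_le _ _ (hW j) T hcomm ⟨b, hb j, rfl⟩
  by_cases hb0 : b = 0
  · exact ⟨0, by rw [hb0, map_zero, zero_smul]⟩
  · have hbU : (⟨b, hb⟩ : ↥(⨅ j, W j)) ≠ 0 := fun h => hb0 (congrArg Subtype.val h)
    obtain ⟨c, hc⟩ := (finrank_eq_one_iff_of_nonzero' _ hbU).mp hdim ⟨T b, hTb⟩
    refine ⟨c, ?_⟩
    have h2 := congrArg Subtype.val hc
    simpa using h2.symm
end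

section
/- In the setting of the function space ℱ on the Johnson graph J(n,k): for any standard Young tableau λ_1 ↗ ... ↗ λ_{i−1} (1 ≤ i ≤ n) and any suffix word c_{i+1}...c_n over {1,2}, the subspace ℱ_{λ_1...λ_{i−1}}^{c_{i+1}...c_n} has dimension at most 2. -/
open Finset

noncomputable section

/-- Words of length `n` over the alphabet `{1,2}` with exactly `k` letters `1`
(`true` = letter `1`), encoding the `k`-subsets of `{1,…,n}`. -/
abbrev JWord (n k : ℕ) : Type :=
  {w : Fin n → Bool // (Finset.univ.filter (fun i => w i = true)).card = k}

/-- The space `ℱ` of complex functions on the Johnson graph `J(n,k)`. -/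
abbrev JFun (n k : ℕ) : Type := JWord n k → ℂ

/-- The action of a permutation on words: `(σ • w) i = w (σ⁻¹ i)`. -/
def permAct {n k : ℕ} (σ : Equiv.Perm (Fin n)) (w : JWord n k) : JWord n k :=
  ⟨fun i => w.1 (σ⁻¹ i), by
    have h : (Finset.univ.filter (fun i => w.1 (σ⁻¹ i) = true)).card
        = (Finset.univ.filter (fun i => w.1 i = true)).card :=
      Finset.card_equiv σ⁻¹ (by intro i; simp)
    exact h.trans w.2⟩

/-- The action of `σ ∈ S_n` on the function space: `(σ f)(x) = f(σ⁻¹ • x)`. -/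
def permOp {n k : ℕ} (σ : Equiv.Perm (Fin n)) : JFun n k →ₗ[ℂ] JFun n k :=
  LinearMap.funLeft ℂ ℂ (permAct σ⁻¹)

/-- The Jucys-Murphy operator `J_{t+1}` (0-based index `t`) acting on the function
space: the sum of the operators of the transpositions `(l, t)`, `l < t`. -/
def JOp (n k : ℕ) (t : Fin n) : JFun n k →ₗ[ℂ] JFun n k :=
  ∑ l ∈ Finset.univ.filter (fun l => l < t), permOp (Equiv.swap l t)

/-- The delta function at a word. -/
def delta {n k : ℕ} (w : JWord n k) : JFun n k := fun x => if x = w then 1 else 0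

/-- `ℱ^{c_q…c_n}`: the span of the delta functions of the words whose letters at the
1-based positions `q, …, n` agree with `c`. -/
def suffixSpace (n k q : ℕ) (c : Fin n → Bool) : Submodule ℂ (JFun n k) :=
  Submodule.span ℂ
    {f | ∃ w : JWord n k, (∀ i : Fin n, q ≤ (i : ℕ) + 1 → w.1 i = c i) ∧ f = delta w}

/-- The content of the box added when passing from the Young diagram `μ` to `ν`. -/
def boxContent (μ ν : YoungDiagram) : ℤ := ∑ x ∈ ν.cells \ μ.cells, ((x.2 : ℤ) - (x.1 : ℤ))

/-- A chain `∅ = μ_0 ↗ μ_1 ↗ ⋯ ↗ μ_p` of Young diagrams, i.e. a standard Young tableau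
with `p` boxes. -/
def IsChainSYT (p : ℕ) (μ : Fin (p + 1) → YoungDiagram) : Prop :=
  (μ 0).cells = ∅ ∧
    ∀ j : Fin p, μ j.castSucc ≤ μ j.succ ∧ (μ j.succ).cells.card = (j : ℕ) + 1

/-- `ℱ_{λ_1…λ_p}`: the Gelfand-Tsetlin subspace of the chain `μ`, the simultaneous
eigenspace of the Jucys-Murphy operators `J_1, …, J_p` with eigenvalues the contents of
the successively added boxes. -/
def gtSpace (n k p : ℕ) (hp : p ≤ n) (μ : Fin (p + 1) → YoungDiagram) :
    Submodule ℂ (JFun n k) :=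
  ⨅ j : Fin p,
    Module.End.eigenspace (JOp n k ⟨(j : ℕ), lt_of_lt_of_le j.2 hp⟩)
      ((boxContent (μ j.castSucc) (μ j.succ) : ℤ) : ℂ)

/-- The inner product on `ℱ` making the delta functions orthonormal. -/
def innerF {n k : ℕ} (f g : JFun n k) : ℂ := ∑ x, (starRingEnd ℂ) (f x) * g x

namespace Aux

variable {n k : ℕ}

lemma permOp_apply (σ : Equiv.Perm (Fin n)) (f : JFun n k) (x : JWord n k) :
    permOp σ f x = f (permAct σ⁻¹ x) := rfl

lemma permAct_coe (σ : Equiv.Perm (Fin n)) (x : JWord n k) (i : Fin n) :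
    (permAct σ x).1 i = x.1 (σ⁻¹ i) := rfl

lemma permAct_inv_coe (σ : Equiv.Perm (Fin n)) (x : JWord n k) (i : Fin n) :
    (permAct σ⁻¹ x).1 i = x.1 (σ i) := by simp [permAct_coe]

/-- The submodule of functions supported on a set of words. -/
def suppSub (S : Set (JWord n k)) : Submodule ℂ (JFun n k) where
  carrier := {f | ∀ w, w ∉ S → f w = 0}
  add_mem' := by intro f g hf hg w hw; simp [hf w hw, hg w hw]
  zero_mem' := by intro w hw; rfl
  smul_mem' := by intro a f hf w hw; simp [hf w hw]

lemma mem_suppSub {S : Set (JWord n k)} {f : JFun n k} :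
    f ∈ suppSub S ↔ ∀ w, w ∉ S → f w = 0 := Iff.rfl

lemma sum_delta (f : JFun n k) : ∑ w, f w • delta w = f := by
  funext x
  simp only [Finset.sum_apply, Pi.smul_apply, delta, smul_eq_mul]
  rw [Finset.sum_eq_single x]
  · simp
  · intro b _ hb; simp [Ne.symm hb]
  · intro h; exact absurd (Finset.mem_univ x) h

def Matches (q : ℕ) (c : Fin n → Bool) (w : JWord n k) : Prop :=
  ∀ i : Fin n, q ≤ (i : ℕ) + 1 → w.1 i = c i

lemma suffixSpace_eq (q : ℕ) (c : Fin n → Bool) :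
    suffixSpace n k q c = suppSub {w | Matches q c w} := by
  apply le_antisymm
  · rw [suffixSpace, Submodule.span_le]
    rintro f ⟨w, hw, rfl⟩
    intro x hx
    simp only [delta]
    rw [if_neg]
    rintro rfl; exact hx hw
  · intro f hf
    rw [← sum_delta f]
    apply Submodule.sum_mem
    intro w _
    by_cases hw : Matches q c w
    · exact Submodule.smul_mem _ _ (Submodule.subset_span ⟨w, hw, rfl⟩)
    · rw [hf w hw, zero_smul]; exact Submodule.zero_mem _

lemma mem_suffixSpace {q : ℕ} {c : Fin n → Bool} {f : JFun n k} :
    f ∈ suffixSpace n k q c ↔ ∀ w : JWord n k, ¬ Matches q c w → f w = 0 := by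
  rw [suffixSpace_eq]; rfl

end Aux
namespace Aux
variable {n k : ℕ}

/-- Projection onto functions supported on words whose letter at `t` is `b`. -/
def proj (t : Fin n) (b : Bool) : JFun n k →ₗ[ℂ] JFun n k where
  toFun f := fun x => if x.1 t = b then f x else 0
  map_add' f g := by funext x; by_cases h : x.1 t = b <;> simp [h]
  map_smul' a f := by funext x; by_cases h : x.1 t = b <;> simp [h]

lemma proj_apply (t : Fin n) (b : Bool) (f : JFun n k) (x : JWord n k) :
    proj t b f x = if x.1 t = b then f x else 0 := rfl

lemma proj_add_proj (t : Fin n) (f : JFun n k) :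
    proj t false f + proj t true f = f := by
  funext x
  simp only [Pi.add_apply, proj_apply]
  cases h : x.1 t <;> simp [h]

lemma JOp_apply (t : Fin n) (f : JFun n k) (x : JWord n k) :
    JOp n k t f x = ∑ l ∈ Finset.univ.filter (fun l => l < t),
      f (permAct (Equiv.swap l t) x) := by
  rw [JOp]
  rw [LinearMap.sum_apply]
  rw [Finset.sum_apply]
  refine Finset.sum_congr rfl fun l _ => ?_
  rw [permOp_apply, Equiv.swap_inv]

lemma proj_permOp_comm (t : Fin n) (b : Bool) (σ : Equiv.Perm (Fin n)) (hσ : σ t = t)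
    (f : JFun n k) : proj t b (permOp σ f) = permOp σ (proj t b f) := by
  funext x
  rw [proj_apply, permOp_apply, permOp_apply, proj_apply, permAct_inv_coe, hσ]

lemma proj_JOp_comm (t s : Fin n) (b : Bool) (hst : s < t) (f : JFun n k) :
    proj t b (JOp n k s f) = JOp n k s (proj t b f) := by
  rw [JOp, LinearMap.sum_apply, LinearMap.sum_apply, map_sum]
  refine Finset.sum_congr rfl fun l hl => ?_
  rw [Finset.mem_filter] at hl
  refine proj_permOp_comm t b _ ?_ f
  refine Equiv.swap_apply_of_ne_of_ne ?_ ?_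
  · exact (hl.2.trans hst).ne'
  · exact hst.ne'

lemma proj_eigen {t s : Fin n} {b : Bool} (hst : s < t) {a : ℂ} {f : JFun n k}
    (hf : f ∈ Module.End.eigenspace (JOp n k s) a) :
    proj t b f ∈ Module.End.eigenspace (JOp n k s) a := by
  rw [Module.End.mem_eigenspace_iff] at hf ⊢
  show JOp n k s (proj t b f) = _
  rw [← proj_JOp_comm t s b hst, hf, map_smul]

end Aux
namespace Cube
open Finset

variable {q : ℕ}

/-- The "lowering" operator flipping one letter `o` to `!o`. -/
def U (o : Bool) (f : (Fin q → Bool) → ℂ) : (Fin q → Bool) → ℂ :=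
  fun u => ∑ l ∈ univ.filter (fun l => u l = o), f (Function.update u l (!o))

/-- The "raising" operator flipping one letter `!o` to `o`. -/
def D (o : Bool) (f : (Fin q → Bool) → ℂ) : (Fin q → Bool) → ℂ :=
  fun u => ∑ l ∈ univ.filter (fun l => u l = !o), f (Function.update u l o)

def ip (f g : (Fin q → Bool) → ℂ) : ℂ := ∑ u, (starRingEnd ℂ) (f u) * g u

lemma update_update (u : Fin q → Bool) (l : Fin q) (b : Bool) :
    Function.update (Function.update u l b) l (u l) = u := by
  rw [Function.update_idem, Function.update_eq_self]

lemma ip_U (o : Bool) (g h : (Fin q → Bool) → ℂ) : ip (U o g) h = ip g (D o h) := by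
  unfold ip U D
  simp only [map_sum, Finset.sum_mul, Finset.mul_sum]
  rw [Finset.sum_sigma', Finset.sum_sigma']
  refine Finset.sum_nbij' (i := fun p => ⟨Function.update p.1 p.2 (!o), p.2⟩)
    (j := fun p => ⟨Function.update p.1 p.2 o, p.2⟩) ?_ ?_ ?_ ?_ ?_
  · rintro ⟨u, l⟩ hp
    simp only [Finset.mem_sigma, Finset.mem_univ, Finset.mem_filter, true_and] at hp ⊢
    simp
  · rintro ⟨v, l⟩ hp
    simp only [Finset.mem_sigma, Finset.mem_univ, Finset.mem_filter, true_and] at hp ⊢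
    simp
  · rintro ⟨u, l⟩ hp
    simp only [Finset.mem_sigma, Finset.mem_univ, Finset.mem_filter, true_and] at hp
    simp only [Sigma.mk.inj_iff, heq_eq_eq, and_true]
    rw [Function.update_idem, ← hp, Function.update_eq_self]
  · rintro ⟨v, l⟩ hp
    simp only [Finset.mem_sigma, Finset.mem_univ, Finset.mem_filter, true_and] at hp
    simp only [Sigma.mk.inj_iff, heq_eq_eq, and_true]
    rw [Function.update_idem, ← hp, Function.update_eq_self]
  · rintro ⟨u, l⟩ hp
    simp only [Finset.mem_sigma, Finset.mem_univ, Finset.mem_filter, true_and] at hp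
    congr 1
    rw [Function.update_idem, ← hp, Function.update_eq_self]

lemma U_ip (o : Bool) (g h : (Fin q → Bool) → ℂ) : ip g (U o h) = ip (D o g) h := by
  unfold ip U D
  simp only [map_sum, Finset.sum_mul, Finset.mul_sum]
  rw [Finset.sum_sigma', Finset.sum_sigma']
  refine Finset.sum_nbij' (i := fun p => ⟨Function.update p.1 p.2 (!o), p.2⟩)
    (j := fun p => ⟨Function.update p.1 p.2 o, p.2⟩) ?_ ?_ ?_ ?_ ?_
  · rintro ⟨u, l⟩ hp
    simp only [Finset.mem_sigma, Finset.mem_univ, Finset.mem_filter, true_and] at hp ⊢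
    simp
  · rintro ⟨v, l⟩ hp
    simp only [Finset.mem_sigma, Finset.mem_univ, Finset.mem_filter, true_and] at hp ⊢
    simp
  · rintro ⟨u, l⟩ hp
    simp only [Finset.mem_sigma, Finset.mem_univ, Finset.mem_filter, true_and] at hp
    simp only [Sigma.mk.inj_iff, heq_eq_eq, and_true]
    rw [Function.update_idem, ← hp, Function.update_eq_self]
  · rintro ⟨v, l⟩ hp
    simp only [Finset.mem_sigma, Finset.mem_univ, Finset.mem_filter, true_and] at hp
    simp only [Sigma.mk.inj_iff, heq_eq_eq, and_true]
    rw [Function.update_idem, ← hp, Function.update_eq_self]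
  · rintro ⟨u, l⟩ hp
    simp only [Finset.mem_sigma, Finset.mem_univ, Finset.mem_filter, true_and] at hp
    congr 1
    rw [Function.update_idem, ← hp, Function.update_eq_self]

lemma filter_update (o : Bool) (u : Fin q → Bool) (l : Fin q) (hl : u l = !o) :
    univ.filter (fun l' => Function.update u l o l' = o)
      = insert l (univ.filter fun l' => u l' = o) := by
  ext l'
  simp only [Finset.mem_filter, Finset.mem_univ, true_and, Finset.mem_insert]
  rcases eq_or_ne l' l with rfl | hne
  · simp
  · rw [Function.update_of_ne hne]
    simp [hne]

lemma l_notMem (o : Bool) (u : Fin q → Bool) (l : Fin q) (hl : u l = !o) :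
    l ∉ univ.filter (fun l' => u l' = o) := by
  simp only [Finset.mem_filter, Finset.mem_univ, true_and, hl]
  cases o <;> simp

/-- The commutator identity `DU = UD + (q - 2j)` on functions supported on level `j`. -/
lemma comm_DU (o : Bool) (j : ℕ) (f : (Fin q → Bool) → ℂ)
    (hsupp : ∀ u, f u ≠ 0 → (univ.filter fun l => u l = o).card = j)
    (u : Fin q → Bool) :
    D o (U o f) u = U o (D o f) u + ((q : ℂ) - 2 * j) * f u := by
  have hDU : D o (U o f) u
      = ((univ.filter fun l => u l = !o).card : ℂ) * f u
        + ∑ l ∈ univ.filter (fun l => u l = !o), ∑ l' ∈ univ.filter (fun l' => u l' = o),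
            f (Function.update (Function.update u l o) l' (!o)) := by
    have step : ∀ l ∈ univ.filter (fun l => u l = !o),
        U o f (Function.update u l o)
          = f u + ∑ l' ∈ univ.filter (fun l' => u l' = o),
              f (Function.update (Function.update u l o) l' (!o)) := by
      intro l hl
      rw [Finset.mem_filter] at hl
      unfold U
      rw [filter_update o u l hl.2, Finset.sum_insert (l_notMem o u l hl.2)]
      congr 1
      rw [Function.update_idem, ← hl.2, Function.update_eq_self]
    unfold D
    rw [Finset.sum_congr rfl step, Finset.sum_add_distrib, Finset.sum_const, nsmul_eq_mul]
  have hUD : U o (D o f) u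
      = ((univ.filter fun l => u l = o).card : ℂ) * f u
        + ∑ l' ∈ univ.filter (fun l' => u l' = o), ∑ l ∈ univ.filter (fun l => u l = !o),
            f (Function.update (Function.update u l' (!o)) l o) := by
    have step : ∀ l' ∈ univ.filter (fun l' => u l' = o),
        D o f (Function.update u l' (!o))
          = f u + ∑ l ∈ univ.filter (fun l => u l = !o),
              f (Function.update (Function.update u l' (!o)) l o) := by
      intro l' hl'
      rw [Finset.mem_filter] at hl'
      have h2 : u l' = !(!o) := by rw [hl'.2, Bool.not_not]
      unfold D
      rw [filter_update (!o) u l' h2, Finset.sum_insert (l_notMem (!o) u l' h2)]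
      congr 1
      · rw [Function.update_idem, ← hl'.2, Function.update_eq_self]
    unfold U
    rw [Finset.sum_congr rfl step, Finset.sum_add_distrib, Finset.sum_const, nsmul_eq_mul]
  have hcross : ∑ l ∈ univ.filter (fun l => u l = !o), ∑ l' ∈ univ.filter (fun l' => u l' = o),
            f (Function.update (Function.update u l o) l' (!o))
      = ∑ l' ∈ univ.filter (fun l' => u l' = o), ∑ l ∈ univ.filter (fun l => u l = !o),
            f (Function.update (Function.update u l' (!o)) l o) := by
    rw [Finset.sum_comm]
    refine Finset.sum_congr rfl fun l' hl' => Finset.sum_congr rfl fun l hl => ?_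
    rw [Finset.mem_filter] at hl hl'
    have hne : l' ≠ l := by
      intro h; rw [h, hl.2] at hl'; cases o <;> simp_all
    rw [Function.update_comm hne]
  rw [hDU, hUD, hcross]
  rcases eq_or_ne (f u) 0 with h0 | h0
  · rw [h0]; ring
  · have hcard := hsupp u h0
    have hcard2 : (univ.filter fun l => u l = !o).card = q - j := by
      have := Finset.card_filter_add_card_filter_not
        (s := (univ : Finset (Fin q))) (p := fun l => u l = o)
      simp only [Finset.card_univ, Fintype.card_fin] at this
      have hnot : (univ.filter fun l => ¬ u l = o).card = (univ.filter fun l => u l = !o).card := by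
        congr 1
        apply Finset.filter_congr
        intro x _
        cases o <;> cases h : u x <;> simp
      omega
    have hjq : j ≤ q := by
      rw [← hcard]
      exact (Finset.card_filter_le _ _).trans (by simp)
    rw [hcard, hcard2]
    have : ((q - j : ℕ) : ℂ) = (q : ℂ) - (j : ℂ) := by
      push_cast [hjq]; ring
    rw [this]
    ring

lemma ip_self_nonneg_eq (g : (Fin q → Bool) → ℂ) :
    ip g g = ((∑ u, Complex.normSq (g u) : ℝ) : ℂ) := by
  unfold ip
  push_cast
  refine Finset.sum_congr rfl fun u _ => ?_
  rw [Complex.normSq_eq_conj_mul_self]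

lemma cube_inj (o : Bool) (j : ℕ) (f : (Fin q → Bool) → ℂ)
    (hsupp : ∀ u, f u ≠ 0 → (univ.filter fun l => u l = o).card = j)
    (hj : 2 * j < q) (hU : U o f = 0) : f = 0 := by
  have h0 : ip (U o f) (U o f) = 0 := by rw [hU]; simp [ip]
  rw [ip_U] at h0
  have hD : D o (U o f) = fun u => U o (D o f) u + ((q : ℂ) - 2 * j) * f u :=
    funext (comm_DU o j f hsupp)
  rw [hD] at h0
  have hsplit : ip f (fun u => U o (D o f) u + ((q : ℂ) - 2 * j) * f u)
      = ip f (U o (D o f)) + ((q : ℂ) - 2 * j) * ip f f := by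
    unfold ip
    rw [Finset.mul_sum, ← Finset.sum_add_distrib]
    refine Finset.sum_congr rfl fun u _ => ?_
    ring
  rw [hsplit, U_ip] at h0
  rw [ip_self_nonneg_eq, ip_self_nonneg_eq] at h0
  set A : ℝ := ∑ u, Complex.normSq (D o f u) with hA
  set B : ℝ := ∑ u, Complex.normSq (f u) with hB
  set C : ℝ := (q : ℝ) - 2 * j with hC
  have hAc : ((q : ℂ) - 2 * j) = ((C : ℝ) : ℂ) := by rw [hC]; push_cast; ring
  rw [hAc] at h0
  have h0' : A + C * B = 0 := by exact_mod_cast h0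
  have hAnn : 0 ≤ A := Finset.sum_nonneg fun u _ => Complex.normSq_nonneg _
  have hBnn : 0 ≤ B := Finset.sum_nonneg fun u _ => Complex.normSq_nonneg _
  have hc : (0 : ℝ) < C := by
    rw [hC]
    have : (2 * j : ℝ) < q := by exact_mod_cast hj
    linarith
  have hB0 : B = 0 := by nlinarith
  funext u
  have := (Finset.sum_eq_zero_iff_of_nonneg (fun u _ => Complex.normSq_nonneg (f u))).1 hB0 u (Finset.mem_univ u)
  exact Complex.normSq_eq_zero.1 this

end Cube
namespace Ext
open Finset

variable {n q : ℕ} (hqn : q < n) (c : Fin n → Bool)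

/-- Extend a cube word of length `q` by letter `b0` at position `q` and `c` above. -/
def extend (b0 : Bool) (u : Fin q → Bool) : Fin n → Bool :=
  fun r => if h : (r : ℕ) < q then u ⟨r, h⟩ else if (r : ℕ) = q then b0 else c r

lemma extend_lt (b0 : Bool) (u : Fin q → Bool) (r : Fin n) (h : (r : ℕ) < q) :
    extend c b0 u r = u ⟨r, h⟩ := dif_pos h

lemma extend_eq (b0 : Bool) (u : Fin q → Bool) (r : Fin n) (h : (r : ℕ) = q) :
    extend c b0 u r = b0 := by
  unfold extend; rw [dif_neg (by omega), if_pos h]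

lemma extend_gt (b0 : Bool) (u : Fin q → Bool) (r : Fin n) (h : q < (r : ℕ)) :
    extend c b0 u r = c r := by
  unfold extend; rw [dif_neg (by omega), if_neg (by omega)]

/-- Number of `true`s of `c` strictly above position `q`. -/
def sCount (q : ℕ) (c : Fin n → Bool) : ℕ := (univ.filter (fun r : Fin n => q < (r : ℕ) ∧ c r = true)).card

lemma card_filter_partition {α : Type*} [Fintype α] (P Q : α → Prop)
    [DecidablePred P] [DecidablePred Q] :
    (univ.filter P).card
      = (univ.filter (fun a => P a ∧ Q a)).card + (univ.filter (fun a => P a ∧ ¬ Q a)).card := by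
  classical
  have := Finset.card_filter_add_card_filter_not
    (s := univ.filter P) (p := Q)
  rw [Finset.filter_filter, Finset.filter_filter] at this
  omega

lemma count_extend (hqn : q < n) (b0 : Bool) (u : Fin q → Bool) :
    (univ.filter (fun r => extend c b0 u r = true)).card
      = (univ.filter (fun l : Fin q => u l = true)).card
        + (if b0 then 1 else 0) + sCount q c := by
  set E : Fin n → Prop := fun r => extend c b0 u r = true with hE
  rw [card_filter_partition E (fun r => (r : ℕ) < q)]
  rw [card_filter_partition (fun r => E r ∧ ¬ (r : ℕ) < q) (fun r => (r : ℕ) = q)]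
  have hA : (univ.filter (fun r : Fin n => E r ∧ (r : ℕ) < q)).card
      = (univ.filter (fun l : Fin q => u l = true)).card := by
    refine Finset.card_bij' (fun r hr => ⟨(r : ℕ), (Finset.mem_filter.1 hr).2.2⟩)
      (fun l _ => ⟨(l : ℕ), lt_trans l.2 hqn⟩) ?_ ?_ ?_ ?_
    · intro r hr
      rw [Finset.mem_filter] at hr ⊢
      refine ⟨Finset.mem_univ _, ?_⟩
      have := hr.2.1
      rwa [hE, extend_lt c b0 u r hr.2.2] at this
    · intro l hl
      rw [Finset.mem_filter] at hl ⊢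
      refine ⟨Finset.mem_univ _, ?_, l.2⟩
      show extend c b0 u ⟨(l : ℕ), lt_trans l.2 hqn⟩ = true
      rw [extend_lt c b0 u ⟨(l : ℕ), lt_trans l.2 hqn⟩ l.2]
      simpa using hl.2
    · intro r hr; exact Fin.ext rfl
    · intro l hl; exact Fin.ext rfl
  have hB1 : (univ.filter (fun r : Fin n => (E r ∧ ¬ (r : ℕ) < q) ∧ (r : ℕ) = q)).card
      = (if b0 then 1 else 0) := by
    have hset : (univ.filter (fun r : Fin n => (E r ∧ ¬ (r : ℕ) < q) ∧ (r : ℕ) = q))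
        = if b0 then {(⟨q, hqn⟩ : Fin n)} else ∅ := by
      ext r
      simp only [Finset.mem_filter, Finset.mem_univ, true_and]
      constructor
      · rintro ⟨⟨hEr, -⟩, hq⟩
        rw [hE, extend_eq c b0 u r hq] at hEr
        rw [if_pos hEr, Finset.mem_singleton]
        exact Fin.ext hq
      · intro hr
        by_cases hb : b0 = true
        · rw [if_pos hb, Finset.mem_singleton] at hr
          subst hr
          refine ⟨⟨?_, by simp⟩, rfl⟩
          show extend c b0 u ⟨q, hqn⟩ = true
          rw [extend_eq c b0 u ⟨q, hqn⟩ rfl]; exact hb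
        · rw [if_neg hb] at hr; exact absurd hr (Finset.notMem_empty _)
    rw [hset]
    by_cases hb : b0 = true
    · rw [if_pos hb, if_pos hb, Finset.card_singleton]
    · rw [if_neg hb, if_neg hb, Finset.card_empty]
  have hB2 : (univ.filter (fun r : Fin n => (E r ∧ ¬ (r : ℕ) < q) ∧ ¬ (r : ℕ) = q)).card
      = sCount q c := by
    unfold sCount
    congr 1
    ext r
    simp only [Finset.mem_filter, Finset.mem_univ, true_and]
    constructor
    · rintro ⟨⟨hEr, h1⟩, h2⟩
      have hgt : q < (r : ℕ) := by omega
      rw [hE, extend_gt c b0 u r hgt] at hEr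
      exact ⟨hgt, hEr⟩
    · rintro ⟨hgt, hc⟩
      refine ⟨⟨?_, by omega⟩, by omega⟩
      show extend c b0 u r = true
      rw [extend_gt c b0 u r hgt]; exact hc
  rw [hA, hB1, hB2]
  omega

lemma count_update (u : Fin q → Bool) (l : Fin q) (b : Bool) :
    (univ.filter (fun l' => Function.update u l b l' = true)).card
        + (if u l then 1 else 0)
      = (univ.filter (fun l' => u l' = true)).card + (if b then 1 else 0) := by
  rcases eq_or_ne (u l) b with heq | hne
  · rw [← heq, Function.update_eq_self]
  · cases hb : b
    · rw [hb] at hne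
      have hul : u l = true := by cases h : u l <;> simp_all
      have hset : univ.filter (fun l' => Function.update u l false l' = true)
          = (univ.filter (fun l' => u l' = true)).erase l := by
        ext l'
        rcases eq_or_ne l' l with rfl | hne'
        · simp [Function.update_self]
        · simp [Function.update_of_ne hne', hne']
      rw [hset, Finset.card_erase_of_mem (by simp [hul]), hul]
      have hpos : 0 < (univ.filter (fun l' => u l' = true)).card :=
        Finset.card_pos.2 ⟨l, by simp [hul]⟩
      simp only [if_true, Bool.false_eq_true, if_false]
      omega
    · rw [hb] at hne
      have hul : u l = false := by cases h : u l <;> simp_all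
      have hset : univ.filter (fun l' => Function.update u l true l' = true)
          = insert l (univ.filter (fun l' => u l' = true)) := by
        ext l'
        rcases eq_or_ne l' l with rfl | hne'
        · simp [Function.update_self]
        · simp [Function.update_of_ne hne', hne']
      rw [hset, Finset.card_insert_of_notMem (by simp [hul]), hul]
      simp

end Ext
namespace Step
open Finset Aux

variable {n k q : ℕ}

lemma bool_ne (b o : Bool) (h : b ≠ o) : b = !o := by cases b <;> cases o <;> simp_all

/-- Any word in the support of `f` is the extension of its own first `q` letters. -/
lemma word_repr (hq : q < n) (c : Fin n → Bool) (o : Bool) (f : JFun n k)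
    (h1 : f ∈ suffixSpace n k (q + 2) c)
    (h2 : proj ⟨q, hq⟩ (!o) f = 0)
    (w : JWord n k) (hw : f w ≠ 0) :
    w.1 = Ext.extend c o (fun l : Fin q => w.1 ⟨(l : ℕ), lt_trans l.2 hq⟩) := by
  have hM : Matches (q + 2) c w := by
    by_contra hM
    exact hw (mem_suffixSpace.1 h1 w hM)
  have hpq : w.1 ⟨q, hq⟩ = o := by
    by_contra hne
    have hb : w.1 ⟨q, hq⟩ = !o := bool_ne _ _ hne
    have h0 := congrFun h2 w
    rw [proj_apply, if_pos hb] at h0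
    exact hw h0
  funext i
  rcases lt_trichotomy (i : ℕ) q with hlt | heq | hgt
  · rw [Ext.extend_lt c o _ i hlt]
  · rw [Ext.extend_eq c o _ i heq]
    have hi : i = ⟨q, hq⟩ := Fin.ext heq
    rw [hi, hpq]
  · rw [Ext.extend_gt c o _ i hgt]
    exact hM i (by omega)

lemma count_flip (hq : q < n) (c : Fin n → Bool) (o : Bool) (u : Fin q → Bool) (l : Fin q)
    (hl : u l = o) :
    (univ.filter (fun r => Ext.extend c o (Function.update u l (!o)) r = true)).card
      = (univ.filter (fun r => Ext.extend c (!o) u r = true)).card := by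
  rw [Ext.count_extend c hq o (Function.update u l (!o)), Ext.count_extend c hq (!o) u]
  have h1 := Ext.count_update u l (!o)
  cases o <;> simp [hl] at h1 ⊢ <;> omega

lemma inj_step_cube (hq : q < n) (c : Fin n → Bool) (o : Bool) (j : ℕ) (f : JFun n k)
    (h1 : f ∈ suffixSpace n k (q + 2) c)
    (h2 : proj ⟨q, hq⟩ (!o) f = 0)
    (a : ℂ) (heig : JOp n k ⟨q, hq⟩ f = a • f)
    (hcount : ∀ u : Fin q → Bool,
      (univ.filter (fun r => Ext.extend c o u r = true)).card = k →
        (univ.filter fun l => u l = o).card = j)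
    (h2j : 2 * j < q) : f = 0 := by
  classical
  set pq : Fin n := ⟨q, hq⟩ with hpq
  set fc : (Fin q → Bool) → ℂ := fun u =>
    if h : (univ.filter (fun r => Ext.extend c o u r = true)).card = k
    then f ⟨Ext.extend c o u, h⟩ else 0 with hfc
  have hsupp : ∀ u, fc u ≠ 0 → (univ.filter fun l => u l = o).card = j := by
    intro u hu
    by_cases h : (univ.filter (fun r => Ext.extend c o u r = true)).card = k
    · exact hcount u h
    · exfalso; apply hu; rw [hfc]; exact dif_neg h
  have hU : Cube.U o fc = 0 := by
    funext u
    rw [Pi.zero_apply]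
    show ∑ l ∈ univ.filter (fun l => u l = o), fc (Function.update u l (!o)) = 0
    by_cases hk : (univ.filter (fun r => Ext.extend c (!o) u r = true)).card = k
    · set x : JWord n k := ⟨Ext.extend c (!o) u, hk⟩ with hx
      have hx0 : (JOp n k pq f) x = 0 := by
        rw [heig, Pi.smul_apply]
        have hfx : f x = 0 := by
          have h0 := congrFun h2 x
          rw [proj_apply, if_pos (Ext.extend_eq c (!o) u pq rfl)] at h0
          exact h0
        rw [hfx, smul_zero]
      rw [JOp_apply] at hx0
      rw [← Finset.sum_filter_add_sum_filter_not (univ.filter (fun l' : Fin n => l' < pq))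
        (fun l' => x.1 l' = o) (fun l' => f (permAct (Equiv.swap l' pq) x))] at hx0
      have hzero : ∑ l' ∈ (univ.filter (fun l' : Fin n => l' < pq)).filter
          (fun l' => ¬ x.1 l' = o), f (permAct (Equiv.swap l' pq) x) = 0 := by
        apply Finset.sum_eq_zero
        intro l' hl'
        rw [Finset.mem_filter] at hl'
        have hbo : x.1 l' = !o := bool_ne _ _ hl'.2
        have hy : (permAct (Equiv.swap l' pq) x).1 pq = !o := by
          rw [permAct_coe, Equiv.swap_inv, Equiv.swap_apply_right]
          exact hbo
        have h0 := congrFun h2 (permAct (Equiv.swap l' pq) x)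
        rw [proj_apply, if_pos hy] at h0
        exact h0
      rw [hzero, add_zero] at hx0
      rw [← hx0]
      refine Finset.sum_bij' (i := fun (l : Fin q) (hl : l ∈ univ.filter (fun l => u l = o)) =>
          (⟨(l : ℕ), lt_trans l.2 hq⟩ : Fin n))
        (j := fun (l' : Fin n) (hl' : l' ∈ (univ.filter (fun l' : Fin n => l' < pq)).filter
          (fun l' => x.1 l' = o)) =>
          (⟨(l' : ℕ), by
            rw [Finset.mem_filter, Finset.mem_filter] at hl'
            exact hl'.1.2⟩ : Fin q)) ?_ ?_ ?_ ?_ ?_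
      · intro l hl
        rw [Finset.mem_filter] at hl
        rw [Finset.mem_filter, Finset.mem_filter]
        refine ⟨⟨Finset.mem_univ _, l.2⟩, ?_⟩
        rw [hx]
        show Ext.extend c (!o) u ⟨(l : ℕ), _⟩ = o
        rw [Ext.extend_lt c (!o) u _ l.2]
        rw [show (⟨(⟨(l : ℕ), lt_trans l.2 hq⟩ : Fin n), l.2⟩ : Fin q) = l from Fin.ext rfl]
        exact hl.2
      · intro l' hl'
        rw [Finset.mem_filter, Finset.mem_filter] at hl'
        rw [Finset.mem_filter]
        refine ⟨Finset.mem_univ _, ?_⟩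
        have hxl : Ext.extend c (!o) u l' = o := hl'.2
        rw [Ext.extend_lt c (!o) u l' hl'.1.2] at hxl
        exact hxl
      · intro l hl; exact Fin.ext rfl
      · intro l' hl'; exact Fin.ext rfl
      · intro l hl
        rw [Finset.mem_filter] at hl
        have hul : u l = o := hl.2
        have hcond : (univ.filter (fun r =>
            Ext.extend c o (Function.update u l (!o)) r = true)).card = k := by
          rw [count_flip hq c o u l hul]; exact hk
        have hfcval : fc (Function.update u l (!o))
            = f ⟨Ext.extend c o (Function.update u l (!o)), hcond⟩ := by
          simp only [hfc]
          rw [dif_pos hcond]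
        rw [hfcval]
        refine congrArg f (Subtype.ext ?_)
        have hswap : (permAct (Equiv.swap (⟨(l : ℕ), lt_trans l.2 hq⟩ : Fin n) pq) x).1
            = Ext.extend c o (Function.update u l (!o)) := by
          funext i
          rw [permAct_coe, Equiv.swap_inv]
          set lf : Fin n := ⟨(l : ℕ), lt_trans l.2 hq⟩ with hlf
          rcases eq_or_ne i lf with rfl | hne1
          · rw [Equiv.swap_apply_left, hx]
            show Ext.extend c (!o) u pq = Ext.extend c o (Function.update u l (!o)) lf
            rw [Ext.extend_eq c (!o) u pq rfl, Ext.extend_lt c o _ lf l.2]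
            rw [show (⟨(lf : ℕ), l.2⟩ : Fin q) = l from Fin.ext rfl]
            rw [Function.update_self]
          · rcases eq_or_ne i pq with rfl | hne2
            · rw [Equiv.swap_apply_right, hx]
              show Ext.extend c (!o) u lf = Ext.extend c o (Function.update u l (!o)) pq
              rw [Ext.extend_lt c (!o) u lf l.2, Ext.extend_eq c o _ pq rfl]
              rw [show (⟨(lf : ℕ), l.2⟩ : Fin q) = l from Fin.ext rfl]
              exact hul
            · rw [Equiv.swap_apply_of_ne_of_ne hne1 hne2, hx]
              show Ext.extend c (!o) u i = Ext.extend c o (Function.update u l (!o)) i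
              rcases lt_trichotomy (i : ℕ) q with hlt | heq | hgt
              · rw [Ext.extend_lt c (!o) u i hlt, Ext.extend_lt c o _ i hlt]
                rw [Function.update_of_ne]
                intro hEq
                apply hne1
                apply Fin.ext
                show (i : ℕ) = (l : ℕ)
                exact congrArg Fin.val hEq
              · exact absurd (Fin.ext heq : i = pq) hne2
              · rw [Ext.extend_gt c (!o) u i hgt, Ext.extend_gt c o _ i hgt]
        rw [hswap]
    · apply Finset.sum_eq_zero
      intro l hl
      rw [Finset.mem_filter] at hl
      have : fc (Function.update u l (!o)) = 0 := by
        simp only [hfc]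
        exact dif_neg (fun hcond => hk (by rwa [count_flip hq c o u l hl.2] at hcond))
      exact this
  have hfc0 : fc = 0 := Cube.cube_inj o j fc hsupp h2j hU
  funext w
  rw [Pi.zero_apply]
  by_contra hw
  have hrep := word_repr hq c o f h1 h2 w hw
  set u0 : Fin q → Bool := fun l : Fin q => w.1 ⟨(l : ℕ), lt_trans l.2 hq⟩ with hu0
  have hk0 : (univ.filter (fun r => Ext.extend c o u0 r = true)).card = k := by
    rw [← hrep]; exact w.2
  have h00 : f ⟨Ext.extend c o u0, hk0⟩ = 0 := by
    have h01 := congrFun hfc0 u0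
    simp only [hfc, Pi.zero_apply] at h01
    rwa [dif_pos hk0] at h01
  apply hw
  rw [show w = ⟨Ext.extend c o u0, hk0⟩ from Subtype.ext hrep]
  exact h00

end Step
namespace Step
open Finset Aux

variable {n k q : ℕ}

instance : FiniteDimensional ℂ (JFun n k) := by
  unfold JFun; infer_instance

lemma inj_step_empty (hq : q < n) (c : Fin n → Bool) (o : Bool) (f : JFun n k)
    (h1 : f ∈ suffixSpace n k (q + 2) c)
    (h2 : proj ⟨q, hq⟩ (!o) f = 0)
    (hempty : ∀ u : Fin q → Bool,
      (univ.filter (fun r => Ext.extend c o u r = true)).card ≠ k) : f = 0 := by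
  funext w
  rw [Pi.zero_apply]
  by_contra hw
  have hrep := word_repr hq c o f h1 h2 w hw
  exact hempty _ (by rw [← hrep]; exact w.2)

lemma bool_filter_split (u : Fin q → Bool) :
    (univ.filter (fun l => u l = true)).card + (univ.filter (fun l => u l = false)).card = q := by
  have h1 := Finset.card_filter_add_card_filter_not
    (s := (univ : Finset (Fin q))) (p := fun l => u l = true)
  have h2 : univ.filter (fun l : Fin q => ¬ u l = true) = univ.filter (fun l => u l = false) := by
    apply Finset.filter_congr
    intro x _
    simp [Bool.not_eq_true]
  rw [h2] at h1
  simpa using h1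

lemma proj_mem (hq : q < n) (c : Fin n → Bool) (a : ℕ → ℂ) (b : Bool) (f : JFun n k)
    (hf1 : f ∈ suffixSpace n k (q + 2) c)
    (hf2 : ∀ j : Fin q, f ∈ Module.End.eigenspace (JOp n k ⟨(j : ℕ), lt_trans j.2 hq⟩) (a j)) :
    proj ⟨q, hq⟩ b f ∈ suffixSpace n k (q + 1) (Function.update c ⟨q, hq⟩ b)
      ⊓ ⨅ j : Fin q, Module.End.eigenspace (JOp n k ⟨(j : ℕ), lt_trans j.2 hq⟩) (a j) := by
  rw [Submodule.mem_inf]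
  constructor
  · rw [mem_suffixSpace]
    intro w hnm
    rw [proj_apply]
    by_cases hb : w.1 ⟨q, hq⟩ = b
    · rw [if_pos hb]
      apply mem_suffixSpace.1 hf1
      intro hM
      apply hnm
      intro i hi
      rcases eq_or_ne i ⟨q, hq⟩ with rfl | hne
      · rw [Function.update_self]; exact hb
      · rw [Function.update_of_ne hne]
        apply hM
        have hiq : (i : ℕ) ≠ q := fun h => hne (Fin.ext h)
        omega
    · rw [if_neg hb]
  · rw [Submodule.mem_iInf]
    intro j
    exact proj_eigen (show (⟨(j : ℕ), lt_trans j.2 hq⟩ : Fin n) < ⟨q, hq⟩ from j.2) (hf2 j)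

lemma one (n k : ℕ) : ∀ (M : ℕ) (hM : M ≤ n) (c : Fin n → Bool) (a : ℕ → ℂ),
    Module.finrank ℂ ↥(suffixSpace n k (M + 1) c ⊓
      ⨅ j : Fin M, Module.End.eigenspace
        (JOp n k ⟨(j : ℕ), lt_of_lt_of_le j.2 hM⟩) (a j)) ≤ 1 := by
  intro M
  induction M with
  | zero =>
    intro hM c a
    have hle : suffixSpace n k 1 c ⊓ (⨅ j : Fin 0, Module.End.eigenspace
        (JOp n k ⟨(j : ℕ), lt_of_lt_of_le j.2 hM⟩) (a j)) ≤ suffixSpace n k 1 c := inf_le_left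
    refine le_trans (Submodule.finrank_mono hle) ?_
    rcases em (∃ w : JWord n k, ∀ i : Fin n, (1 : ℕ) ≤ (i : ℕ) + 1 → w.1 i = c i) with ⟨w0, hw0⟩ | hex
    · have hle2 : suffixSpace n k 1 c ≤ Submodule.span ℂ {delta w0} := by
        rw [suffixSpace]
        apply Submodule.span_le.2
        rintro f ⟨w, hw, rfl⟩
        have hww : w = w0 :=
          Subtype.ext (funext fun i => (hw i (by omega)).trans ((hw0 i (by omega)).symm))
        rw [hww]
        exact Submodule.subset_span rfl
      refine le_trans (Submodule.finrank_mono hle2) ?_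
      rcases eq_or_ne (delta w0) 0 with h | h
      · rw [h, Submodule.span_zero_singleton]
        simp
      · exact le_of_eq (finrank_span_singleton h)
    · have hle2 : suffixSpace n k 1 c ≤ ⊥ := by
        rw [suffixSpace]
        apply Submodule.span_le.2
        rintro f ⟨w, hw, rfl⟩
        exact absurd ⟨w, hw⟩ hex
      refine le_trans (Submodule.finrank_mono hle2) ?_
      simp
  | succ q ih =>
    intro hM c a
    have hq : q < n := lt_of_lt_of_le (Nat.lt_succ_self q) hM
    set s := Ext.sCount q c with hs
    set V := suffixSpace n k (q + 1 + 1) c ⊓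
      ⨅ j : Fin (q + 1), Module.End.eigenspace
        (JOp n k ⟨(j : ℕ), lt_of_lt_of_le j.2 hM⟩) (a j) with hV
    -- choose the letter o
    set o : Bool := if q = 0 then (if s + 1 = k then false else true)
      else (if q + 2 * s + 1 ≤ 2 * k then false else true) with ho
    set c' := Function.update c (⟨q, hq⟩ : Fin n) (!o) with hc'
    set W := suffixSpace n k (q + 1) c' ⊓
      ⨅ j : Fin q, Module.End.eigenspace
        (JOp n k ⟨(j : ℕ), lt_trans j.2 hq⟩) (a j) with hW
    have hmap : ∀ f ∈ V, proj (⟨q, hq⟩ : Fin n) (!o) f ∈ W := by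
      intro f hf
      rw [hV, Submodule.mem_inf] at hf
      refine proj_mem hq c a (!o) f hf.1 ?_
      intro j
      have := (Submodule.mem_iInf _).1 hf.2 ⟨(j : ℕ), lt_trans j.2 (Nat.lt_succ_self q)⟩
      exact this
    have hinj : ∀ f ∈ V, proj (⟨q, hq⟩ : Fin n) (!o) f = 0 → f = 0 := by
      intro f hf h0
      rw [hV, Submodule.mem_inf] at hf
      have heig : JOp n k ⟨q, hq⟩ f = a q • f := by
        have := (Submodule.mem_iInf _).1 hf.2 ⟨q, Nat.lt_succ_self q⟩
        exact Module.End.mem_eigenspace_iff.1 this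
      by_cases hq0 : q = 0
      · subst hq0
        refine inj_step_empty hq c o f hf.1 h0 ?_
        intro u
        rw [Ext.count_extend c hq o u]
        have h00 : (univ.filter (fun l : Fin 0 => u l = true)).card = 0 := by simp
        rw [h00]
        by_cases hsk : s + 1 = k
        · have hoo : o = false := by rw [ho]; simp [hsk]
          rw [hoo]
          simp only [Bool.false_eq_true, if_false]
          omega
        · have hoo : o = true := by rw [ho]; simp [hsk]
          rw [hoo]
          simp only [if_true]
          omega
      · have hq1 : 1 ≤ q := Nat.one_le_iff_ne_zero.2 hq0
        by_cases hmode : q + 2 * s + 1 ≤ 2 * k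
        · have hoo : o = false := by rw [ho]; simp [hq0, hmode]
          refine inj_step_cube hq c o (q - (k - s)) f hf.1 h0 (a q) heig ?_ ?_
          · intro u hu
            rw [Ext.count_extend c hq o u, hoo] at hu
            simp only [Bool.false_eq_true, if_false] at hu
            have hsplit := bool_filter_split u
            have hle : (univ.filter (fun l => u l = true)).card ≤ q := by
              refine le_trans (Finset.card_filter_le _ _) (by simp)
            rw [hoo]
            omega
          · omega
        · have hoo : o = true := by rw [ho]; simp [hq0, hmode]
          refine inj_step_cube hq c o (k - s - 1) f hf.1 h0 (a q) heig ?_ ?_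
          · intro u hu
            rw [Ext.count_extend c hq o u, hoo] at hu
            simp only [if_true] at hu
            rw [hoo]
            omega
          · omega
    -- conclude via the injective restriction
    let L : ↥V →ₗ[ℂ] ↥W := LinearMap.restrict (proj (⟨q, hq⟩ : Fin n) (!o)) hmap
    have hLinj : Function.Injective L := by
      intro x y hxy
      apply Subtype.ext
      have hval : proj (⟨q, hq⟩ : Fin n) (!o) x.1 = proj (⟨q, hq⟩ : Fin n) (!o) y.1 := by
        have := congrArg Subtype.val hxy
        exact this
      have hsub : (x.1 - y.1) ∈ V := sub_mem x.2 y.2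
      have h0 : proj (⟨q, hq⟩ : Fin n) (!o) (x.1 - y.1) = 0 := by
        rw [map_sub, hval, sub_self]
      have := hinj _ hsub h0
      exact sub_eq_zero.1 this
    exact le_trans (LinearMap.finrank_le_finrank_of_injective hLinj) (ih (by omega) c' a)

end Step
open Aux Step in
/-- For `1 ≤ i ≤ n`, any standard Young tableau `λ_1 ↗ ⋯ ↗ λ_{i-1}` and any suffix word
`c_{i+1}…c_n`, the subspace `ℱ_{λ_1…λ_{i-1}}^{c_{i+1}…c_n}` of the function space of the
Johnson graph `J(n,k)` has dimension at most `2`. -/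
theorem gt_suffix_subspace_dim_le_two
    (n k i : ℕ) (hi : 1 ≤ i) (hin : i ≤ n) (c : Fin n → Bool)
    (μ : Fin ((i - 1) + 1) → YoungDiagram) (hμ : IsChainSYT (i - 1) μ) :
    Module.finrank ℂ
      ↥(suffixSpace n k (i + 1) c ⊓ gtSpace n k (i - 1) (by omega) μ) ≤ 2 := by
  obtain ⟨m, rfl⟩ : ∃ m, i = m + 1 := ⟨i - 1, by omega⟩
  have hq : m < n := by omega
  classical
  set a : ℕ → ℂ := fun t => if h : t < m then
      ((boxContent (μ (Fin.castSucc ⟨t, h⟩)) (μ (Fin.succ ⟨t, h⟩)) : ℤ) : ℂ) else 0 with ha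
  set W : Bool → Submodule ℂ (JFun n k) := fun b =>
    suffixSpace n k (m + 1) (Function.update c ⟨m, hq⟩ b) ⊓
      ⨅ j : Fin m, Module.End.eigenspace
        (JOp n k ⟨(j : ℕ), lt_trans j.2 hq⟩) (a j) with hWdef
  have hmem : ∀ f : JFun n k,
      f ∈ (suffixSpace n k (m + 1 + 1) c ⊓ gtSpace n k (m + 1 - 1) (by omega) μ) →
      f ∈ suffixSpace n k (m + 1 + 1) c ∧
        ∀ j : Fin m, f ∈ Module.End.eigenspace
          (JOp n k ⟨(j : ℕ), lt_trans j.2 hq⟩) (a j) := by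
    intro f hf
    rw [Submodule.mem_inf] at hf
    refine ⟨hf.1, ?_⟩
    intro j
    have h2 : f ∈ ⨅ jj : Fin m, Module.End.eigenspace
        (JOp n k ⟨(jj : ℕ), lt_trans jj.2 hq⟩)
        ((boxContent (μ jj.castSucc) (μ jj.succ) : ℤ) : ℂ) := hf.2
    have h3 := (Submodule.mem_iInf _).1 h2 j
    have haj : a (j : ℕ) = ((boxContent (μ j.castSucc) (μ j.succ) : ℤ) : ℂ) := by
      simp only [ha]
      rw [dif_pos j.isLt]
      rfl
    rw [haj]
    exact h3
  have hmapb : ∀ b : Bool, ∀ f ∈ (suffixSpace n k (m + 1 + 1) c ⊓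
      gtSpace n k (m + 1 - 1) (by omega) μ), proj (⟨m, hq⟩ : Fin n) b f ∈ W b := by
    intro b f hf
    exact proj_mem hq c a b f (hmem f hf).1 (hmem f hf).2
  let L := LinearMap.prod
    (LinearMap.restrict (proj (⟨m, hq⟩ : Fin n) false) (hmapb false))
    (LinearMap.restrict (proj (⟨m, hq⟩ : Fin n) true) (hmapb true))
  have hLinj : Function.Injective L := by
    intro x y hxy
    apply Subtype.ext
    have h1 : proj (⟨m, hq⟩ : Fin n) false x.1 = proj (⟨m, hq⟩ : Fin n) false y.1 :=
      congrArg Subtype.val (congrArg Prod.fst hxy)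
    have h2 : proj (⟨m, hq⟩ : Fin n) true x.1 = proj (⟨m, hq⟩ : Fin n) true y.1 :=
      congrArg Subtype.val (congrArg Prod.snd hxy)
    calc x.1 = proj (⟨m, hq⟩ : Fin n) false x.1 + proj (⟨m, hq⟩ : Fin n) true x.1 :=
          (proj_add_proj _ _).symm
      _ = proj (⟨m, hq⟩ : Fin n) false y.1 + proj (⟨m, hq⟩ : Fin n) true y.1 := by
          rw [h1, h2]
      _ = y.1 := proj_add_proj _ _
  refine le_trans (LinearMap.finrank_le_finrank_of_injective hLinj) ?_
  rw [Module.finrank_prod]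
  have b1 : Module.finrank ℂ ↥(W false) ≤ 1 :=
    Step.one n k m (by omega) (Function.update c (⟨m, hq⟩ : Fin n) false) a
  have b2 : Module.finrank ℂ ↥(W true) ≤ 1 :=
    Step.one n k m (by omega) (Function.update c (⟨m, hq⟩ : Fin n) true) a
  omega
end
end

section
/- In the setting of the function space ℱ on the Johnson graph J(n,k): for 1 ≤ i ≤ n−1, the subspace ℱ_{λ_1...λ_{i−1}}^{c_{i+2}...c_n} (prescribing a standard tableau of size i−1 and the suffix starting at position i+2) has dimension at most 4, and is invariant under both the transposition s_i = (i, i+1) and the Jucys-Murphy operator J_i acting on ℱ. -/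
open Finset

noncomputable section

open Function

namespace JModel

variable {p : ℕ}

def cnt {p : ℕ} (x : Fin p → Bool) : ℕ := #(univ.filter fun l => x l = true)

noncomputable def Uo {p : ℕ} (f : (Fin p → Bool) → ℂ) : (Fin p → Bool) → ℂ :=
  fun x => ∑ l ∈ univ.filter (fun l => x l = true), f (Function.update x l false)

noncomputable def Do {p : ℕ} (f : (Fin p → Bool) → ℂ) : (Fin p → Bool) → ℂ :=
  fun x => ∑ l ∈ univ.filter (fun l => x l = false), f (Function.update x l true)

lemma adj_DU (f g : (Fin p → Bool) → ℂ) :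
    ∑ x, (starRingEnd ℂ) (Do f x) * g x = ∑ x, (starRingEnd ℂ) (f x) * Uo g x := by
  have L : ∀ x : Fin p → Bool, (starRingEnd ℂ) (Do f x) * g x
      = ∑ l ∈ univ.filter (fun l => x l = false),
          (starRingEnd ℂ) (f (update x l true)) * g x := by
    intro x; rw [Do, map_sum, Finset.sum_mul]
  have R : ∀ x : Fin p → Bool, (starRingEnd ℂ) (f x) * Uo g x
      = ∑ l ∈ univ.filter (fun l => x l = true),
          (starRingEnd ℂ) (f x) * g (update x l false) := by
    intro x; rw [Uo, Finset.mul_sum]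
  simp_rw [L, R]
  rw [Finset.sum_sigma' univ _ _, Finset.sum_sigma' univ _ _]
  refine Finset.sum_bij' (fun a _ => ⟨update a.1 a.2 true, a.2⟩)
    (fun a _ => ⟨update a.1 a.2 false, a.2⟩) ?_ ?_ ?_ ?_ ?_
  · rintro ⟨x, l⟩ ha
    simp only [Finset.mem_sigma, Finset.mem_filter, Finset.mem_univ, true_and] at ha ⊢
    simp [Function.update_self]
  · rintro ⟨x, l⟩ ha
    simp only [Finset.mem_sigma, Finset.mem_filter, Finset.mem_univ, true_and] at ha ⊢
    simp [Function.update_self]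
  · rintro ⟨x, l⟩ ha
    simp only [Finset.mem_sigma, Finset.mem_filter, Finset.mem_univ, true_and] at ha
    simp only [Sigma.mk.inj_iff, heq_eq_eq, and_true]
    rw [Function.update_idem, ← ha, Function.update_eq_self]
  · rintro ⟨x, l⟩ ha
    simp only [Finset.mem_sigma, Finset.mem_filter, Finset.mem_univ, true_and] at ha
    simp only [Sigma.mk.inj_iff, heq_eq_eq, and_true]
    rw [Function.update_idem, ← ha, Function.update_eq_self]
  · rintro ⟨x, l⟩ ha
    simp only [Finset.mem_sigma, Finset.mem_filter, Finset.mem_univ, true_and] at ha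
    have : update (update x l true) l false = x := by
      rw [Function.update_idem, ← ha, Function.update_eq_self]
    simp [this]

lemma adj_UD (f g : (Fin p → Bool) → ℂ) :
    ∑ x, (starRingEnd ℂ) (Uo f x) * g x = ∑ x, (starRingEnd ℂ) (f x) * Do g x := by
  have L : ∀ x : Fin p → Bool, (starRingEnd ℂ) (Uo f x) * g x
      = ∑ l ∈ univ.filter (fun l => x l = true),
          (starRingEnd ℂ) (f (update x l false)) * g x := by
    intro x; rw [Uo, map_sum, Finset.sum_mul]
  have R : ∀ x : Fin p → Bool, (starRingEnd ℂ) (f x) * Do g x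
      = ∑ l ∈ univ.filter (fun l => x l = false),
          (starRingEnd ℂ) (f x) * g (update x l true) := by
    intro x; rw [Do, Finset.mul_sum]
  simp_rw [L, R]
  rw [Finset.sum_sigma' univ _ _, Finset.sum_sigma' univ _ _]
  refine Finset.sum_bij' (fun a _ => ⟨update a.1 a.2 false, a.2⟩)
    (fun a _ => ⟨update a.1 a.2 true, a.2⟩) ?_ ?_ ?_ ?_ ?_
  · rintro ⟨x, l⟩ ha
    simp only [Finset.mem_sigma, Finset.mem_filter, Finset.mem_univ, true_and] at ha ⊢
    simp [Function.update_self]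
  · rintro ⟨x, l⟩ ha
    simp only [Finset.mem_sigma, Finset.mem_filter, Finset.mem_univ, true_and] at ha ⊢
    simp [Function.update_self]
  · rintro ⟨x, l⟩ ha
    simp only [Finset.mem_sigma, Finset.mem_filter, Finset.mem_univ, true_and] at ha
    simp only [Sigma.mk.inj_iff, heq_eq_eq, and_true]
    rw [Function.update_idem, ← ha, Function.update_eq_self]
  · rintro ⟨x, l⟩ ha
    simp only [Finset.mem_sigma, Finset.mem_filter, Finset.mem_univ, true_and] at ha
    simp only [Sigma.mk.inj_iff, heq_eq_eq, and_true]
    rw [Function.update_idem, ← ha, Function.update_eq_self]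
  · rintro ⟨x, l⟩ ha
    simp only [Finset.mem_sigma, Finset.mem_filter, Finset.mem_univ, true_and] at ha
    have : update (update x l false) l true = x := by
      rw [Function.update_idem, ← ha, Function.update_eq_self]
    simp [this]

lemma filter_update_true (x : Fin p → Bool) (l : Fin p) (h : x l = false) :
    univ.filter (fun j => update x l true j = true)
      = insert l (univ.filter fun j => x j = true) := by
  ext j
  by_cases hj : j = l <;> simp [hj, Function.update_apply, h]

lemma filter_update_false (x : Fin p → Bool) (l : Fin p) (h : x l = true) :
    univ.filter (fun j => update x l false j = false)
      = insert l (univ.filter fun j => x j = false) := by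
  ext j
  by_cases hj : j = l <;> simp [hj, Function.update_apply, h]

lemma DoUo (f : (Fin p → Bool) → ℂ) (x : Fin p → Bool) :
    Do (Uo f) x + (2 * (cnt x : ℂ)) * f x = Uo (Do f) x + (p : ℂ) * f x := by
  classical
  have h1 : Do (Uo f) x = #(univ.filter fun j => x j = false) * f x
      + ∑ l ∈ univ.filter (fun l => x l = false), ∑ j ∈ univ.filter (fun j => x j = true),
          f (update (update x j false) l true) := by
    rw [Do]
    have : ∀ l ∈ univ.filter (fun l => x l = false),
        Uo f (update x l true) = f x + ∑ j ∈ univ.filter (fun j => x j = true),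
          f (update (update x j false) l true) := by
      intro l hl
      simp only [Finset.mem_filter, Finset.mem_univ, true_and] at hl
      rw [Uo, filter_update_true x l hl, Finset.sum_insert (by simp [hl])]
      congr 1
      · rw [Function.update_idem, ← hl, Function.update_eq_self]
      · refine Finset.sum_congr rfl fun j hj => ?_
        simp only [Finset.mem_filter, Finset.mem_univ, true_and] at hj
        have hne : j ≠ l := fun hh => by rw [hh, hl] at hj; exact Bool.noConfusion hj
        rw [Function.update_comm hne]
    rw [Finset.sum_congr rfl this, Finset.sum_add_distrib, Finset.sum_const, nsmul_eq_mul]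
  have h2 : Uo (Do f) x = #(univ.filter fun j => x j = true) * f x
      + ∑ l ∈ univ.filter (fun l => x l = true), ∑ j ∈ univ.filter (fun j => x j = false),
          f (update (update x j true) l false) := by
    rw [Uo]
    have : ∀ l ∈ univ.filter (fun l => x l = true),
        Do f (update x l false) = f x + ∑ j ∈ univ.filter (fun j => x j = false),
          f (update (update x j true) l false) := by
      intro l hl
      simp only [Finset.mem_filter, Finset.mem_univ, true_and] at hl
      rw [Do, filter_update_false x l hl, Finset.sum_insert (by simp [hl])]
      congr 1
      · rw [Function.update_idem, ← hl, Function.update_eq_self]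
      · refine Finset.sum_congr rfl fun j hj => ?_
        simp only [Finset.mem_filter, Finset.mem_univ, true_and] at hj
        have hne : j ≠ l := fun hh => by rw [hh, hl] at hj; exact Bool.noConfusion hj
        rw [Function.update_comm hne]
    rw [Finset.sum_congr rfl this, Finset.sum_add_distrib, Finset.sum_const, nsmul_eq_mul]
  have h3 : ∑ l ∈ univ.filter (fun l => x l = false), ∑ j ∈ univ.filter (fun j => x j = true),
        f (update (update x j false) l true)
      = ∑ l ∈ univ.filter (fun l => x l = true), ∑ j ∈ univ.filter (fun j => x j = false),
        f (update (update x j true) l false) := by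
    rw [Finset.sum_comm]
    refine Finset.sum_congr rfl fun l hl => Finset.sum_congr rfl fun j hj => ?_
    simp only [Finset.mem_filter, Finset.mem_univ, true_and] at hl hj
    have hne : j ≠ l := fun hh => by rw [hh, hl] at hj; exact Bool.noConfusion hj
    rw [Function.update_comm hne]
  have hcard : #(univ.filter fun j => x j = false) + cnt x = p := by
    have h := Finset.card_filter_add_card_filter_not (s := (univ : Finset (Fin p)))
      (p := fun j => x j = true)
    simp only [Finset.card_univ, Fintype.card_fin] at h
    have hset : (univ.filter fun j => ¬ x j = true) = (univ.filter fun j => x j = false) := by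
      ext j; simp [Bool.not_eq_true]
    rw [hset] at h
    rw [cnt]
    omega
  have hn : (#(univ.filter fun j => x j = false) : ℂ) + 2 * (cnt x : ℂ) = (cnt x : ℂ) + p := by
    have : #(univ.filter fun j : Fin p => x j = false) + 2 * cnt x = cnt x + p := by omega
    exact_mod_cast congrArg (Nat.cast : ℕ → ℂ) this
  rw [h1, h2, ← h3, show #(univ.filter fun j : Fin p => x j = true) = cnt x from rfl]
  linear_combination f x * hn


lemma energy (f : (Fin p → Bool) → ℂ) :
    ∑ x, (starRingEnd ℂ) (Uo f x) * Uo f x + ∑ x, (2 * (cnt x : ℂ)) * ((starRingEnd ℂ) (f x) * f x)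
      = ∑ x, (starRingEnd ℂ) (Do f x) * Do f x + (p : ℂ) * ∑ x, (starRingEnd ℂ) (f x) * f x := by
  rw [adj_UD f (Uo f), adj_DU f (Do f), Finset.mul_sum,
    ← Finset.sum_add_distrib, ← Finset.sum_add_distrib]
  refine Finset.sum_congr rfl fun x _ => ?_
  have h := DoUo f x
  linear_combination (starRingEnd ℂ) (f x) * h

lemma energy_real (f : (Fin p → Bool) → ℂ) :
    ∑ x, Complex.normSq (Uo f x) + ∑ x, 2 * (cnt x : ℝ) * Complex.normSq (f x)
      = ∑ x, Complex.normSq (Do f x) + (p : ℝ) * ∑ x, Complex.normSq (f x) := by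
  have hE := energy f
  have c1 : ∀ g : (Fin p → Bool) → ℂ, ∑ x, (starRingEnd ℂ) (g x) * g x
      = ((∑ x, Complex.normSq (g x) : ℝ) : ℂ) := by
    intro g
    rw [Complex.ofReal_sum]
    exact Finset.sum_congr rfl fun x _ => (Complex.normSq_eq_conj_mul_self).symm
  have c2 : ∑ x, (2 * (cnt x : ℂ)) * ((starRingEnd ℂ) (f x) * f x)
      = ((∑ x, 2 * (cnt x : ℝ) * Complex.normSq (f x) : ℝ) : ℂ) := by
    rw [Complex.ofReal_sum]
    refine Finset.sum_congr rfl fun x _ => ?_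
    rw [← Complex.normSq_eq_conj_mul_self]
    push_cast
    ring
  rw [c1 (Uo f), c1 (Do f), c2, c1 f] at hE
  have : (((∑ x, Complex.normSq (Uo f x)) + ∑ x, 2 * (cnt x : ℝ) * Complex.normSq (f x) : ℝ) : ℂ)
      = (((∑ x, Complex.normSq (Do f x)) + (p : ℝ) * ∑ x, Complex.normSq (f x) : ℝ) : ℂ) := by
    push_cast
    push_cast at hE
    linear_combination hE
  exact_mod_cast this

lemma inj_up (f : (Fin p → Bool) → ℂ) (hs : ∀ x, f x ≠ 0 → 2 * cnt x < p)
    (h0 : Uo f = 0) : f = 0 := by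
  have hE := energy_real f
  have hz : ∑ x, Complex.normSq (Uo f x) = 0 := by
    rw [h0]; simp
  rw [hz, zero_add] at hE
  have hexp : ∑ x, ((p : ℝ) - 2 * (cnt x : ℝ)) * Complex.normSq (f x)
      = (p : ℝ) * ∑ x, Complex.normSq (f x) - ∑ x, 2 * (cnt x : ℝ) * Complex.normSq (f x) := by
    rw [Finset.mul_sum, ← Finset.sum_sub_distrib]
    exact Finset.sum_congr rfl fun x _ => by ring
  have hDnn : 0 ≤ ∑ x, Complex.normSq (Do f x) :=
    Finset.sum_nonneg fun x _ => Complex.normSq_nonneg _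
  have hsle : ∑ x, ((p : ℝ) - 2 * (cnt x : ℝ)) * Complex.normSq (f x) ≤ 0 := by
    rw [hexp]; linarith
  have hterm : ∀ x ∈ (univ : Finset (Fin p → Bool)),
      0 ≤ ((p : ℝ) - 2 * (cnt x : ℝ)) * Complex.normSq (f x) := by
    intro x _
    by_cases hf : f x = 0
    · simp [hf]
    · have h1 : 2 * cnt x < p := hs x hf
      have : (0:ℝ) ≤ (p : ℝ) - 2 * (cnt x : ℝ) := by
        have : (2 * cnt x : ℝ) < (p : ℝ) := by exact_mod_cast h1
        push_cast at this ⊢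
        linarith
      exact mul_nonneg this (Complex.normSq_nonneg _)
  have hzero := (Finset.sum_eq_zero_iff_of_nonneg hterm).mp
    (le_antisymm hsle (Finset.sum_nonneg hterm))
  funext x
  by_contra hf
  have h1 : 2 * cnt x < p := hs x hf
  have hc : (0:ℝ) < (p : ℝ) - 2 * (cnt x : ℝ) := by
    have : (2 * cnt x : ℝ) < (p : ℝ) := by exact_mod_cast h1
    push_cast at this ⊢
    linarith
  have := hzero x (Finset.mem_univ x)
  have := mul_pos hc (Complex.normSq_pos.mpr hf)
  simp only [Pi.zero_apply] at *
  linarith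

lemma inj_down (f : (Fin p → Bool) → ℂ) (hs : ∀ x, f x ≠ 0 → p < 2 * cnt x)
    (h0 : Do f = 0) : f = 0 := by
  have hE := energy_real f
  have hz : ∑ x, Complex.normSq (Do f x) = 0 := by
    rw [h0]; simp
  rw [hz, zero_add] at hE
  have hexp : ∑ x, (2 * (cnt x : ℝ) - (p : ℝ)) * Complex.normSq (f x)
      = ∑ x, 2 * (cnt x : ℝ) * Complex.normSq (f x) - (p : ℝ) * ∑ x, Complex.normSq (f x) := by
    rw [Finset.mul_sum, ← Finset.sum_sub_distrib]
    exact Finset.sum_congr rfl fun x _ => by ring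
  have hUnn : 0 ≤ ∑ x, Complex.normSq (Uo f x) :=
    Finset.sum_nonneg fun x _ => Complex.normSq_nonneg _
  have hsle : ∑ x, (2 * (cnt x : ℝ) - (p : ℝ)) * Complex.normSq (f x) ≤ 0 := by
    rw [hexp]; linarith
  have hterm : ∀ x ∈ (univ : Finset (Fin p → Bool)),
      0 ≤ (2 * (cnt x : ℝ) - (p : ℝ)) * Complex.normSq (f x) := by
    intro x _
    by_cases hf : f x = 0
    · simp [hf]
    · have h1 : p < 2 * cnt x := hs x hf
      have : (0:ℝ) ≤ 2 * (cnt x : ℝ) - (p : ℝ) := by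
        have : (p : ℝ) < (2 * cnt x : ℝ) := by exact_mod_cast h1
        push_cast at this ⊢
        linarith
      exact mul_nonneg this (Complex.normSq_nonneg _)
  have hzero := (Finset.sum_eq_zero_iff_of_nonneg hterm).mp
    (le_antisymm hsle (Finset.sum_nonneg hterm))
  funext x
  by_contra hf
  have h1 : p < 2 * cnt x := hs x hf
  have hc : (0:ℝ) < 2 * (cnt x : ℝ) - (p : ℝ) := by
    have : (p : ℝ) < (2 * cnt x : ℝ) := by exact_mod_cast h1
    push_cast at this ⊢
    linarith
  have := hzero x (Finset.mem_univ x)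
  have := mul_pos hc (Complex.normSq_pos.mpr hf)
  simp only [Pi.zero_apply] at *
  linarith

lemma cnt_update_false (x : Fin p → Bool) (l : Fin p) (h : x l = true) :
    cnt (update x l false) + 1 = cnt x := by
  have h1 : univ.filter (fun j => update x l false j = true)
      = (univ.filter fun j => x j = true).erase l := by
    ext j
    by_cases hj : j = l <;> simp [hj, Function.update_apply, h]
  have hl : l ∈ univ.filter fun j => x j = true := by simp [h]
  rw [cnt, cnt, h1, Finset.card_erase_of_mem hl]
  have : 1 ≤ #(univ.filter fun j => x j = true) := Finset.card_pos.mpr ⟨l, hl⟩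
  omega

lemma cnt_update_true (x : Fin p → Bool) (l : Fin p) (h : x l = false) :
    cnt (update x l true) = cnt x + 1 := by
  have h1 : univ.filter (fun j => update x l true j = true)
      = insert l (univ.filter fun j => x j = true) := filter_update_true x l h
  have hl : l ∉ univ.filter fun j => x j = true := by simp [h]
  rw [cnt, cnt, h1, Finset.card_insert_of_notMem hl]

end JModel


-- ====== auxiliary development ======
namespace JAux

variable {n k : ℕ}

lemma permAct_coe (σ : Equiv.Perm (Fin n)) (w : JWord n k) (i : Fin n) :
    (permAct σ w).1 i = w.1 (σ⁻¹ i) := rfl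

lemma permOp_apply (σ : Equiv.Perm (Fin n)) (f : JFun n k) (w : JWord n k) :
    permOp σ f w = f (permAct σ⁻¹ w) := rfl

lemma permOp_swap_apply (l t : Fin n) (f : JFun n k) (w : JWord n k) :
    permOp (Equiv.swap l t) f w = f (permAct (Equiv.swap l t) w) := by
  rw [permOp_apply, Equiv.swap_inv]

lemma permAct_permAct (σ τ : Equiv.Perm (Fin n)) (w : JWord n k) :
    permAct σ (permAct τ w) = permAct (σ * τ) w := by
  apply Subtype.ext
  funext i
  simp only [permAct_coe, mul_inv_rev, Equiv.Perm.mul_apply]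

lemma permOp_mul (σ τ : Equiv.Perm (Fin n)) :
    (permOp σ : Module.End ℂ (JFun n k)) * permOp τ = permOp (σ * τ) := by
  apply LinearMap.ext
  intro f
  funext w
  show permOp σ (permOp τ f) w = _
  simp only [permOp_apply, permAct_permAct, mul_inv_rev]

lemma JOp_apply (t : Fin n) (f : JFun n k) (w : JWord n k) :
    JOp n k t f w = ∑ l ∈ Finset.univ.filter (fun l => l < t),
      f (permAct (Equiv.swap l t) w) := by
  rw [JOp, LinearMap.sum_apply, Finset.sum_apply]
  exact Finset.sum_congr rfl fun l _ => permOp_swap_apply l t f w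

lemma permAct_swap_coe (l t : Fin n) (w : JWord n k) (j : Fin n) :
    (permAct (Equiv.swap l t) w).1 j = w.1 (Equiv.swap l t j) := by
  rw [permAct_coe, Equiv.swap_inv]

lemma permAct_swap_fix (l t : Fin n) (w : JWord n k) (h : w.1 l = w.1 t) :
    permAct (Equiv.swap l t) w = w := by
  apply Subtype.ext
  funext j
  rw [permAct_swap_coe, Equiv.swap_apply_def]
  split_ifs with h1 h2
  · rw [h1, h]
  · rw [h2, h]
  · rfl

lemma swap_mul_swap_same {a b c : Fin n} (hab : a ≠ b) (hac : a ≠ c) (hbc : b ≠ c) :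
    Equiv.swap a b * Equiv.swap a c = Equiv.swap b c * Equiv.swap a b := by
  ext x
  simp only [Equiv.Perm.mul_apply, Equiv.swap_apply_def]
  split_ifs <;> simp_all

lemma swap_mul_swap_disjoint {a b c d : Fin n} (hca : c ≠ a) (hcb : c ≠ b)
    (hda : d ≠ a) (hdb : d ≠ b) :
    Equiv.swap a b * Equiv.swap c d = Equiv.swap c d * Equiv.swap a b := by
  have hdisj : (Equiv.swap a b).Disjoint (Equiv.swap c d) := by
    intro x
    by_cases hx : x = a ∨ x = b
    · right
      rcases hx with rfl | rfl
      · exact Equiv.swap_apply_of_ne_of_ne (Ne.symm hca) (Ne.symm hda)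
      · exact Equiv.swap_apply_of_ne_of_ne (Ne.symm hcb) (Ne.symm hdb)
    · left
      push_neg at hx
      exact Equiv.swap_apply_of_ne_of_ne hx.1 hx.2
  exact hdisj.commute.eq

lemma JOp_mul_comm (t s : Fin n) (hts : t < s) :
    (JOp n k t : Module.End ℂ (JFun n k)) * JOp n k s = JOp n k s * JOp n k t := by
  rw [JOp, JOp, Finset.sum_mul_sum, Finset.sum_mul_sum]
  simp_rw [permOp_mul]
  rw [← Finset.sum_product', ← Finset.sum_product']
  refine Finset.sum_bij'
    (fun a _ => ((if a.2 = a.1 then t else if a.2 = t then a.1 else a.2), a.1))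
    (fun a _ => (a.2, if a.1 = a.2 then t else if a.1 = t then a.2 else a.1)) ?_ ?_ ?_ ?_ ?_
  · rintro ⟨l, m⟩ ha
    simp only [Finset.mem_product, Finset.mem_filter, Finset.mem_univ, true_and] at ha ⊢
    obtain ⟨hl, hm⟩ := ha
    refine ⟨?_, hl⟩
    split_ifs with h1 h2
    · exact hts
    · exact lt_trans hl hts
    · exact hm
  · rintro ⟨a, b⟩ ha
    simp only [Finset.mem_product, Finset.mem_filter, Finset.mem_univ, true_and] at ha ⊢
    obtain ⟨has, hbt⟩ := ha
    refine ⟨hbt, ?_⟩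
    split_ifs with h1 h2
    · exact hts
    · exact lt_trans hbt hts
    · exact has
  · rintro ⟨l, m⟩ ha
    simp only [Finset.mem_product, Finset.mem_filter, Finset.mem_univ, true_and] at ha
    obtain ⟨hl, hm⟩ := ha
    dsimp only
    by_cases h1 : m = l
    · subst h1
      rw [if_pos rfl, if_neg (ne_of_gt hl), if_pos rfl]
    · rw [if_neg h1]
      by_cases h2 : m = t
      · subst h2
        rw [if_pos rfl, if_pos rfl]
      · rw [if_neg h2, if_neg (fun hh : m = l => h1 hh), if_neg h2]
  · rintro ⟨a, b⟩ ha
    simp only [Finset.mem_product, Finset.mem_filter, Finset.mem_univ, true_and] at ha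
    obtain ⟨has, hbt⟩ := ha
    dsimp only
    by_cases h1 : a = b
    · subst h1
      rw [if_pos rfl, if_neg (ne_of_gt hbt), if_pos rfl]
    · rw [if_neg h1]
      by_cases h2 : a = t
      · subst h2
        rw [if_pos rfl, if_pos rfl]
      · rw [if_neg h2, if_neg h1, if_neg h2]
  · rintro ⟨l, m⟩ ha
    simp only [Finset.mem_product, Finset.mem_filter, Finset.mem_univ, true_and] at ha
    obtain ⟨hl, hm⟩ := ha
    dsimp only
    by_cases h1 : m = l
    · subst h1
      rw [if_pos rfl]
      exact congrArg permOp
        (swap_mul_swap_same (ne_of_lt hl) (ne_of_lt (lt_trans hl hts)) (ne_of_lt hts))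
    · rw [if_neg h1]
      by_cases h2 : m = t
      · rw [if_pos h2, h2]
        refine congrArg permOp ?_
        have h3 := swap_mul_swap_same (a := t) (b := l) (c := s)
          (Ne.symm (ne_of_lt hl)) (ne_of_lt hts) (ne_of_lt (lt_trans hl hts))
        rw [Equiv.swap_comm t l] at h3
        exact h3
      · rw [if_neg h2]
        exact congrArg permOp (swap_mul_swap_disjoint h1 h2
          (Ne.symm (ne_of_lt (lt_trans hl hts))) (Ne.symm (ne_of_lt hts)))


def Sset (n k : ℕ) (q : ℕ) (c : Fin n → Bool) : Set (JWord n k) :=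
  {w | ∀ j : Fin n, q ≤ (j : ℕ) + 1 → w.1 j = c j}

def suppSub (S : Set (JWord n k)) : Submodule ℂ (JFun n k) where
  carrier := {f | ∀ w, w ∉ S → f w = 0}
  add_mem' := by
    intro a b ha hb w hw
    show a w + b w = 0
    rw [ha w hw, hb w hw, add_zero]
  zero_mem' := fun w _ => rfl
  smul_mem' := by
    intro r a ha w hw
    show r * a w = 0
    rw [ha w hw, mul_zero]

lemma mem_suppSub {S : Set (JWord n k)} {f : JFun n k} :
    f ∈ suppSub S ↔ ∀ w, w ∉ S → f w = 0 := Iff.rfl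

lemma delta_ne_zero (w : JWord n k) : delta w ≠ 0 := by
  intro h
  have := congrFun h w
  simp [delta] at this

lemma sum_delta (f : JFun n k) : f = ∑ w, f w • delta w := by
  funext x
  rw [Finset.sum_apply]
  have : ∀ w : JWord n k, (f w • delta w) x = if x = w then f w else 0 := by
    intro w
    show f w * (if x = w then 1 else 0) = _
    split_ifs <;> simp
  simp_rw [this]
  rw [Finset.sum_ite_eq univ x f]
  simp

lemma suffixSpace_eq (q : ℕ) (c : Fin n → Bool) :
    suffixSpace n k q c = suppSub (Sset n k q c) := by
  classical
  apply le_antisymm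
  · rw [suffixSpace, Submodule.span_le]
    rintro f ⟨w, hw, rfl⟩
    intro w' hw'
    have : w' ≠ w := fun h => hw' (h ▸ hw)
    simp [delta, this]
  · intro f hf
    rw [sum_delta f]
    apply Submodule.sum_mem
    intro w _
    by_cases hw : w ∈ Sset n k q c
    · exact Submodule.smul_mem _ _ (Submodule.subset_span ⟨w, hw, rfl⟩)
    · rw [hf w hw, zero_smul]
      exact Submodule.zero_mem _

def Pb (pos : Fin n) (b : Bool) : JFun n k →ₗ[ℂ] JFun n k where
  toFun f := fun w => if w.1 pos = b then f w else 0
  map_add' f g := by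
    funext w
    by_cases h : w.1 pos = b <;> simp [h]
  map_smul' r f := by
    funext w
    by_cases h : w.1 pos = b <;> simp [h]

lemma Pb_apply (pos : Fin n) (b : Bool) (f : JFun n k) (w : JWord n k) :
    Pb pos b f w = if w.1 pos = b then f w else 0 := rfl

lemma Pb_add_Pb (pos : Fin n) (f : JFun n k) :
    Pb pos false f + Pb pos true f = f := by
  funext w
  show (if w.1 pos = false then f w else 0) + (if w.1 pos = true then f w else 0) = f w
  cases h : w.1 pos <;> simp [h]

lemma Pb_JOp_comm (pos t : Fin n) (ht : t < pos) (b : Bool) (f : JFun n k) :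
    Pb pos b (JOp n k t f) = JOp n k t (Pb pos b f) := by
  funext w
  rw [Pb_apply, JOp_apply, JOp_apply]
  have hcoord : ∀ l ∈ Finset.univ.filter (fun l => l < t),
      (permAct (Equiv.swap l t) w).1 pos = w.1 pos := by
    intro l hl
    simp only [Finset.mem_filter, Finset.mem_univ, true_and] at hl
    rw [permAct_swap_coe, Equiv.swap_apply_of_ne_of_ne
      (Ne.symm (ne_of_lt (lt_trans hl ht))) (Ne.symm (ne_of_lt ht))]
  by_cases h : w.1 pos = b
  · rw [if_pos h]
    refine Finset.sum_congr rfl fun l hl => ?_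
    rw [Pb_apply, if_pos ((hcoord l hl).trans h)]
  · rw [if_neg h]
    symm
    refine Finset.sum_eq_zero fun l hl => ?_
    rw [Pb_apply, if_neg (fun hh => h ((hcoord l hl).symm.trans hh))]

lemma Pb_permOp_swap_comm (pos a b : Fin n) (ha : a ≠ pos) (hb : b ≠ pos) (bb : Bool)
    (f : JFun n k) :
    Pb pos bb (permOp (Equiv.swap a b) f) = permOp (Equiv.swap a b) (Pb pos bb f) := by
  funext w
  rw [Pb_apply, permOp_swap_apply, permOp_swap_apply, Pb_apply,
    permAct_swap_coe, Equiv.swap_apply_of_ne_of_ne (Ne.symm ha) (Ne.symm hb)]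

lemma JOp_comm_apply (t s : Fin n) (hts : t < s) (f : JFun n k) :
    JOp n k t (JOp n k s f) = JOp n k s (JOp n k t f) := by
  have h := JOp_mul_comm (n := n) (k := k) t s hts
  exact congrArg (fun (g : Module.End ℂ (JFun n k)) => g f) h


def sfxCnt (pos : Fin n) (c : Fin n → Bool) : ℕ :=
  #(univ.filter fun j : Fin n => pos < j ∧ c j = true)

def extW (pos : Fin n) (c : Fin n → Bool) (b : Bool) (x : Fin (pos : ℕ) → Bool) :
    Fin n → Bool :=
  fun j => if h : (j : ℕ) < (pos : ℕ) then x ⟨(j : ℕ), h⟩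
    else if (j : ℕ) = (pos : ℕ) then b else c j

lemma extW_lt_eq {pos : Fin n} {c b x} (j : Fin n) (l : Fin (pos : ℕ))
    (h : (j : ℕ) = (l : ℕ)) : extW pos c b x j = x l := by
  have h1 : (j : ℕ) < (pos : ℕ) := h ▸ l.2
  rw [extW, dif_pos h1]
  congr 1
  exact Fin.ext h

lemma extW_pos {pos : Fin n} {c b x} : extW pos c b x pos = b := by
  rw [extW, dif_neg (lt_irrefl _), if_pos rfl]

lemma extW_gt {pos : Fin n} {c b x} (j : Fin n) (h : pos < j) :
    extW pos c b x j = c j := by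
  have h' : (pos : ℕ) < (j : ℕ) := h
  rw [extW, dif_neg (by omega), if_neg (by omega)]

lemma sum_filter_lt_pos {β : Type*} [AddCommMonoid β] (pos : Fin n) (g : Fin n → β) :
    ∑ l ∈ univ.filter (fun l : Fin n => l < pos), g l
      = ∑ l : Fin (pos : ℕ), g ⟨(l : ℕ), lt_trans l.2 pos.2⟩ := by
  refine Finset.sum_bij' (fun l hl => (⟨(l : ℕ), by
      simp only [Finset.mem_filter, Finset.mem_univ, true_and] at hl
      exact hl⟩ : Fin (pos : ℕ)))
    (fun l _ => ⟨(l : ℕ), lt_trans l.2 pos.2⟩) ?_ ?_ ?_ ?_ ?_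
  · intro l hl; exact Finset.mem_univ _
  · intro l _
    simp only [Finset.mem_filter, Finset.mem_univ, true_and]
    exact l.2
  · intro l hl; rfl
  · intro l hl; rfl
  · intro l hl; rfl

lemma extW_card (pos : Fin n) (c : Fin n → Bool) (b : Bool) (x : Fin (pos : ℕ) → Bool) :
    #(univ.filter fun j : Fin n => extW pos c b x j = true)
      = JModel.cnt x + (if b then 1 else 0) + sfxCnt pos c := by
  classical
  rw [Finset.card_filter]
  rw [← Finset.sum_filter_add_sum_filter_not univ (fun j : Fin n => j < pos)]
  have h1 : ∑ j ∈ univ.filter (fun j : Fin n => j < pos),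
      (if extW pos c b x j = true then 1 else 0) = JModel.cnt x := by
    rw [sum_filter_lt_pos pos (fun j => if extW pos c b x j = true then 1 else 0)]
    rw [JModel.cnt, Finset.card_filter]
    refine Finset.sum_congr rfl fun l _ => ?_
    rw [extW_lt_eq _ l rfl]
  have h2 : ∑ j ∈ univ.filter (fun j : Fin n => ¬ j < pos),
      (if extW pos c b x j = true then 1 else 0)
      = (if b then 1 else 0) + sfxCnt pos c := by
    rw [← Finset.sum_filter_add_sum_filter_not
      (univ.filter (fun j : Fin n => ¬ j < pos)) (fun j => j = pos)]
    have hA : (univ.filter (fun j : Fin n => ¬ j < pos)).filter (fun j => j = pos) = {pos} := by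
      ext j
      simp only [Finset.mem_filter, Finset.mem_univ, true_and, Finset.mem_singleton]
      constructor
      · rintro ⟨-, h⟩; exact h
      · rintro rfl; exact ⟨lt_irrefl _, rfl⟩
    have hB : (univ.filter (fun j : Fin n => ¬ j < pos)).filter (fun j => ¬ j = pos)
        = univ.filter (fun j : Fin n => pos < j) := by
      ext j
      simp only [Finset.mem_filter, Finset.mem_univ, true_and]
      constructor
      · rintro ⟨h1', h2'⟩
        rcases lt_trichotomy j pos with h | h | h
        · exact absurd h h1'
        · exact absurd h h2'
        · exact h
      · intro h
        exact ⟨not_lt_of_gt h, ne_of_gt h⟩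
    rw [hA, hB, Finset.sum_singleton, extW_pos]
    congr 1
    have : ∀ j ∈ univ.filter (fun j : Fin n => pos < j),
        (if extW pos c b x j = true then 1 else 0) = (if c j = true then (1:ℕ) else 0) := by
      intro j hj
      simp only [Finset.mem_filter, Finset.mem_univ, true_and] at hj
      rw [extW_gt j hj]
    rw [Finset.sum_congr rfl this, ← Finset.card_filter, Finset.filter_filter, sfxCnt]
  rw [h1, h2]
  ring

lemma swap_extW (pos : Fin n) (c : Fin n → Bool) (x : Fin (pos : ℕ) → Bool)
    (l : Fin (pos : ℕ)) (a : Bool) (j : Fin n) :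
    extW pos c a x (Equiv.swap (⟨(l : ℕ), lt_trans l.2 pos.2⟩ : Fin n) pos j)
      = extW pos c (x l) (Function.update x l a) j := by
  set l' : Fin n := ⟨(l : ℕ), lt_trans l.2 pos.2⟩ with hl'
  rcases eq_or_ne j l' with rfl | hjl
  · rw [Equiv.swap_apply_left, extW_pos, extW_lt_eq l' l rfl, Function.update_self]
  rcases eq_or_ne j pos with rfl | hjp
  · rw [Equiv.swap_apply_right, extW_lt_eq l' l rfl, extW_pos]
  · rw [Equiv.swap_apply_of_ne_of_ne hjl hjp]
    by_cases h1 : (j : ℕ) < (pos : ℕ)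
    · rw [extW_lt_eq j ⟨(j : ℕ), h1⟩ rfl, extW_lt_eq j ⟨(j : ℕ), h1⟩ rfl,
        Function.update_of_ne]
      intro hh
      apply hjl
      apply Fin.ext
      have : ((⟨(j : ℕ), h1⟩ : Fin (pos : ℕ)) : ℕ) = (l : ℕ) := congrArg Fin.val hh
      simpa [hl'] using this
    · have h2 : pos < j := by
        rcases lt_trichotomy pos j with h | h | h
        · exact h
        · exact absurd h.symm hjp
        · exact absurd (by exact h) h1
      rw [extW_gt j h2, extW_gt j h2]


lemma block_vanish_true (pos : Fin n) (c : Fin n → Bool) (u : JFun n k)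
    (hsupp : ∀ w : JWord n k,
      ¬ (w.1 pos = true ∧ ∀ j : Fin n, pos < j → w.1 j = c j) → u w = 0)
    (H : ∀ w : JWord n k, w.1 pos = false →
      ∑ l ∈ univ.filter (fun l => l < pos), u (permAct (Equiv.swap l pos) w) = 0)
    (hnum : ∀ m : ℕ, m + 1 + sfxCnt pos c = k → 2 * m < (pos : ℕ)) :
    u = 0 := by
  classical
  set f : (Fin (pos : ℕ) → Bool) → ℂ := fun x =>
    if h : #(univ.filter fun j => extW pos c true x j = true) = k
    then u ⟨extW pos c true x, h⟩ else 0 with hf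
  have hcard : ∀ (b : Bool) (x : Fin (pos : ℕ) → Bool),
      #(univ.filter fun j => extW pos c b x j = true)
        = JModel.cnt x + (if b then 1 else 0) + sfxCnt pos c := fun b x => extW_card pos c b x
  have hUo : JModel.Uo f = 0 := by
    funext x
    show ∑ l ∈ univ.filter (fun l => x l = true), f (Function.update x l false) = 0
    by_cases hc : JModel.cnt x + sfxCnt pos c = k
    · have hk0 : #(univ.filter fun j => extW pos c false x j = true) = k := by
        rw [hcard]; simpa using hc
      set w₀ : JWord n k := ⟨extW pos c false x, hk0⟩ with hw₀def
      have hw₀ : w₀.1 pos = false := extW_pos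
      have hH := H w₀ hw₀
      have hmain : ∑ l ∈ univ.filter (fun l : Fin (pos : ℕ) => x l = true),
          f (Function.update x l false)
          = ∑ l ∈ (univ.filter fun l : Fin n => l < pos).filter (fun l => w₀.1 l = true),
              u (permAct (Equiv.swap l pos) w₀) := by
        refine Finset.sum_bij' (i := fun l _ => (⟨(l : ℕ), lt_trans l.2 pos.2⟩ : Fin n))
          (j := fun l hl => (⟨(l : ℕ), by
            simp only [Finset.mem_filter, Finset.mem_univ, true_and] at hl
            exact hl.1⟩ : Fin (pos : ℕ))) ?_ ?_ ?_ ?_ ?_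
        · intro l hl
          simp only [Finset.mem_filter, Finset.mem_univ, true_and] at hl ⊢
          constructor
          · exact l.2
          · exact (extW_lt_eq (pos := pos) (c := c) (b := false) (x := x)
              ⟨(l : ℕ), lt_trans l.2 pos.2⟩ l rfl).trans hl
        · intro l hl
          simp only [Finset.mem_filter, Finset.mem_univ, true_and] at hl ⊢
          have h9 := hl.2
          replace h9 : x ⟨(l : ℕ), hl.1⟩ = true := (extW_lt_eq (pos := pos) (c := c)
            (b := false) (x := x) l ⟨(l : ℕ), hl.1⟩ rfl).symm.trans h9
          exact h9
        · intro l hl; exact Fin.ext rfl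
        · intro l hl; exact Fin.ext rfl
        · intro l hl
          simp only [Finset.mem_filter, Finset.mem_univ, true_and] at hl
          have hkl : #(univ.filter fun j =>
              extW pos c true (Function.update x l false) j = true) = k := by
            rw [hcard]
            have h8 := JModel.cnt_update_false x l hl
            rw [show (if (true : Bool) = true then (1:ℕ) else 0) = 1 from rfl]
            omega
          have hword : permAct (Equiv.swap (⟨(l : ℕ), lt_trans l.2 pos.2⟩ : Fin n) pos) w₀
              = ⟨extW pos c true (Function.update x l false), hkl⟩ := by
            apply Subtype.ext
            funext j
            rw [permAct_swap_coe]
            rw [show w₀.1 = extW pos c false x from rfl]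
            rw [swap_extW pos c x l false j, hl]
          rw [hf]
          dsimp only
          rw [dif_pos hkl, hword]
      rw [hmain]
      rw [← Finset.sum_filter_add_sum_filter_not
        (univ.filter fun l : Fin n => l < pos) (fun l => w₀.1 l = true)
        (fun l => u (permAct (Equiv.swap l pos) w₀))] at hH
      have hzero : ∑ l ∈ (univ.filter fun l : Fin n => l < pos).filter
          (fun l => ¬ w₀.1 l = true), u (permAct (Equiv.swap l pos) w₀) = 0 := by
        refine Finset.sum_eq_zero fun l hl => ?_
        simp only [Finset.mem_filter, Finset.mem_univ, true_and, Bool.not_eq_true] at hl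
        rw [permAct_swap_fix _ _ _ (by
          show extW pos c false x l = extW pos c false x pos
          rw [show extW pos c false x l = false from hl.2, extW_pos])]
        exact hsupp w₀ (by simp [hw₀])
      rw [hzero, add_zero] at hH
      exact hH
    · refine Finset.sum_eq_zero fun l hl => ?_
      simp only [Finset.mem_filter, Finset.mem_univ, true_and] at hl
      rw [hf]
      dsimp only
      rw [dif_neg]
      rw [hcard]
      have h8 := JModel.cnt_update_false x l hl
      rw [show (if (true : Bool) = true then (1:ℕ) else 0) = 1 from rfl]
      omega
  have hsupf : ∀ x, f x ≠ 0 → 2 * JModel.cnt x < (pos : ℕ) := by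
    intro x hx
    rw [hf] at hx
    dsimp only at hx
    by_cases h : #(univ.filter fun j => extW pos c true x j = true) = k
    · refine hnum _ ?_
      rw [hcard] at h
      simpa using h
    · rw [dif_neg h] at hx
      exact absurd rfl hx
  have hf0 : f = 0 := JModel.inj_up f hsupf hUo
  funext w
  show u w = 0
  by_cases hw : w.1 pos = true ∧ ∀ j : Fin n, pos < j → w.1 j = c j
  · set x : Fin (pos : ℕ) → Bool := fun l => w.1 ⟨(l : ℕ), lt_trans l.2 pos.2⟩ with hx
    have hxw : extW pos c true x = w.1 := by
      funext j
      by_cases h1 : (j : ℕ) < (pos : ℕ)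
      · rw [extW_lt_eq j ⟨(j : ℕ), h1⟩ rfl, hx]
      · rcases eq_or_ne j pos with rfl | hjp
        · rw [extW_pos, hw.1]
        · have h2 : pos < j := by
            rcases lt_trichotomy pos j with h | h | h
            · exact h
            · exact absurd h.symm hjp
            · exact absurd (by exact h) h1
          rw [extW_gt j h2, hw.2 j h2]
    have hcond : #(univ.filter fun j => extW pos c true x j = true) = k := by
      rw [show (univ.filter fun j => extW pos c true x j = true)
        = univ.filter fun j => w.1 j = true from by rw [hxw]]
      exact w.2
    have huf : u w = f x := by
      rw [hf]
      dsimp only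
      rw [dif_pos hcond]
      exact congrArg u (Subtype.ext hxw.symm)
    rw [huf, hf0]
    rfl
  · exact hsupp w hw

lemma block_vanish_false (pos : Fin n) (c : Fin n → Bool) (u : JFun n k)
    (hsupp : ∀ w : JWord n k,
      ¬ (w.1 pos = false ∧ ∀ j : Fin n, pos < j → w.1 j = c j) → u w = 0)
    (H : ∀ w : JWord n k, w.1 pos = true →
      ∑ l ∈ univ.filter (fun l => l < pos), u (permAct (Equiv.swap l pos) w) = 0)
    (hnum : ∀ m : ℕ, m + sfxCnt pos c = k → (pos : ℕ) < 2 * m) :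
    u = 0 := by
  classical
  set f : (Fin (pos : ℕ) → Bool) → ℂ := fun x =>
    if h : #(univ.filter fun j => extW pos c false x j = true) = k
    then u ⟨extW pos c false x, h⟩ else 0 with hf
  have hcard : ∀ (b : Bool) (x : Fin (pos : ℕ) → Bool),
      #(univ.filter fun j => extW pos c b x j = true)
        = JModel.cnt x + (if b then 1 else 0) + sfxCnt pos c := fun b x => extW_card pos c b x
  have hDo : JModel.Do f = 0 := by
    funext x
    show ∑ l ∈ univ.filter (fun l => x l = false), f (Function.update x l true) = 0
    by_cases hc : JModel.cnt x + 1 + sfxCnt pos c = k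
    · have hk1 : #(univ.filter fun j => extW pos c true x j = true) = k := by
        rw [hcard]; simpa using hc
      set w₁ : JWord n k := ⟨extW pos c true x, hk1⟩ with hw₁def
      have hw₁ : w₁.1 pos = true := extW_pos
      have hH := H w₁ hw₁
      have hmain : ∑ l ∈ univ.filter (fun l : Fin (pos : ℕ) => x l = false),
          f (Function.update x l true)
          = ∑ l ∈ (univ.filter fun l : Fin n => l < pos).filter (fun l => w₁.1 l = false),
              u (permAct (Equiv.swap l pos) w₁) := by
        refine Finset.sum_bij' (i := fun l _ => (⟨(l : ℕ), lt_trans l.2 pos.2⟩ : Fin n))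
          (j := fun l hl => (⟨(l : ℕ), by
            simp only [Finset.mem_filter, Finset.mem_univ, true_and] at hl
            exact hl.1⟩ : Fin (pos : ℕ))) ?_ ?_ ?_ ?_ ?_
        · intro l hl
          simp only [Finset.mem_filter, Finset.mem_univ, true_and] at hl ⊢
          constructor
          · exact l.2
          · exact (extW_lt_eq (pos := pos) (c := c) (b := true) (x := x)
              ⟨(l : ℕ), lt_trans l.2 pos.2⟩ l rfl).trans hl
        · intro l hl
          simp only [Finset.mem_filter, Finset.mem_univ, true_and] at hl ⊢
          have h9 := hl.2
          replace h9 : x ⟨(l : ℕ), hl.1⟩ = false := (extW_lt_eq (pos := pos) (c := c)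
            (b := true) (x := x) l ⟨(l : ℕ), hl.1⟩ rfl).symm.trans h9
          exact h9
        · intro l hl; exact Fin.ext rfl
        · intro l hl; exact Fin.ext rfl
        · intro l hl
          simp only [Finset.mem_filter, Finset.mem_univ, true_and] at hl
          have hkl : #(univ.filter fun j =>
              extW pos c false (Function.update x l true) j = true) = k := by
            rw [hcard]
            have h8 := JModel.cnt_update_true x l hl
            rw [show (if (false : Bool) = true then (1:ℕ) else 0) = 0 from rfl]
            omega
          have hword : permAct (Equiv.swap (⟨(l : ℕ), lt_trans l.2 pos.2⟩ : Fin n) pos) w₁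
              = ⟨extW pos c false (Function.update x l true), hkl⟩ := by
            apply Subtype.ext
            funext j
            rw [permAct_swap_coe]
            rw [show w₁.1 = extW pos c true x from rfl]
            rw [swap_extW pos c x l true j, hl]
          rw [hf]
          dsimp only
          rw [dif_pos hkl, hword]
      rw [hmain]
      rw [← Finset.sum_filter_add_sum_filter_not
        (univ.filter fun l : Fin n => l < pos) (fun l => w₁.1 l = false)
        (fun l => u (permAct (Equiv.swap l pos) w₁))] at hH
      have hzero : ∑ l ∈ (univ.filter fun l : Fin n => l < pos).filter
          (fun l => ¬ w₁.1 l = false), u (permAct (Equiv.swap l pos) w₁) = 0 := by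
        refine Finset.sum_eq_zero fun l hl => ?_
        simp only [Finset.mem_filter, Finset.mem_univ, true_and, Bool.not_eq_false] at hl
        rw [permAct_swap_fix _ _ _ (by
          show extW pos c true x l = extW pos c true x pos
          rw [show extW pos c true x l = true from hl.2, extW_pos])]
        exact hsupp w₁ (by simp [hw₁])
      rw [hzero, add_zero] at hH
      exact hH
    · refine Finset.sum_eq_zero fun l hl => ?_
      simp only [Finset.mem_filter, Finset.mem_univ, true_and] at hl
      rw [hf]
      dsimp only
      rw [dif_neg]
      rw [hcard]
      have h8 := JModel.cnt_update_true x l hl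
      rw [show (if (false : Bool) = true then (1:ℕ) else 0) = 0 from rfl]
      omega
  have hsupf : ∀ x, f x ≠ 0 → (pos : ℕ) < 2 * JModel.cnt x := by
    intro x hx
    rw [hf] at hx
    dsimp only at hx
    by_cases h : #(univ.filter fun j => extW pos c false x j = true) = k
    · refine hnum _ ?_
      rw [hcard] at h
      simpa using h
    · rw [dif_neg h] at hx
      exact absurd rfl hx
  have hf0 : f = 0 := JModel.inj_down f hsupf hDo
  funext w
  show u w = 0
  by_cases hw : w.1 pos = false ∧ ∀ j : Fin n, pos < j → w.1 j = c j
  · set x : Fin (pos : ℕ) → Bool := fun l => w.1 ⟨(l : ℕ), lt_trans l.2 pos.2⟩ with hx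
    have hxw : extW pos c false x = w.1 := by
      funext j
      by_cases h1 : (j : ℕ) < (pos : ℕ)
      · rw [extW_lt_eq j ⟨(j : ℕ), h1⟩ rfl, hx]
      · rcases eq_or_ne j pos with rfl | hjp
        · rw [extW_pos, hw.1]
        · have h2 : pos < j := by
            rcases lt_trichotomy pos j with h | h | h
            · exact h
            · exact absurd h.symm hjp
            · exact absurd (by exact h) h1
          rw [extW_gt j h2, hw.2 j h2]
    have hcond : #(univ.filter fun j => extW pos c false x j = true) = k := by
      rw [show (univ.filter fun j => extW pos c false x j = true)
        = univ.filter fun j => w.1 j = true from by rw [hxw]]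
      exact w.2
    have huf : u w = f x := by
      rw [hf]
      dsimp only
      rw [dif_pos hcond]
      exact congrArg u (Subtype.ext hxw.symm)
    rw [huf, hf0]
    rfl
  · exact hsupp w hw


lemma finrank_prod_submodule {M₁ M₂ : Type*} [AddCommGroup M₁] [Module ℂ M₁]
    [AddCommGroup M₂] [Module ℂ M₂] (A : Submodule ℂ M₁) (B : Submodule ℂ M₂)
    [FiniteDimensional ℂ A] [FiniteDimensional ℂ B] :
    Module.finrank ℂ (A.prod B) = Module.finrank ℂ A + Module.finrank ℂ B := by
  have e : (A.prod B) ≃ₗ[ℂ] (A × B) :=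
    { toFun := fun x => (⟨x.1.1, x.2.1⟩, ⟨x.1.2, x.2.2⟩)
      invFun := fun y => ⟨(y.1.1, y.2.1), ⟨y.1.2, y.2.2⟩⟩
      map_add' := fun a b => rfl
      map_smul' := fun r a => rfl
      left_inv := fun a => rfl
      right_inv := fun a => rfl }
  rw [e.finrank_eq, Module.finrank_prod]

lemma suffix_one_finrank (c : Fin n → Bool) :
    Module.finrank ℂ ↥(suffixSpace n k 1 c) ≤ 1 := by
  classical
  by_cases hex : ∃ w : JWord n k, w.1 = c
  · obtain ⟨w₀, hw₀⟩ := hex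
    have hle : suffixSpace n k 1 c ≤ Submodule.span ℂ {delta w₀} := by
      rw [suffixSpace, Submodule.span_le]
      rintro f ⟨w, hw, rfl⟩
      have hww : w = w₀ := Subtype.ext (by
        funext j
        rw [hw j (by omega), ← hw₀])
      rw [hww]
      exact Submodule.subset_span rfl
    refine le_trans (Submodule.finrank_mono hle) ?_
    rw [finrank_span_singleton (delta_ne_zero w₀)]
  · have hempty : {f : JFun n k | ∃ w : JWord n k,
        (∀ i : Fin n, 1 ≤ (i : ℕ) + 1 → w.1 i = c i) ∧ f = delta w} = ∅ := by
      ext f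
      simp only [Set.mem_setOf_eq, Set.mem_empty_iff_false, iff_false, not_exists]
      rintro w ⟨hw, rfl⟩
      exact absurd ⟨w, funext fun j => hw j (by omega)⟩ hex
    rw [suffixSpace, hempty, Submodule.span_empty]
    simp

lemma lemB (p : ℕ) (α : ℕ → ℂ) :
    ∀ (hp : p ≤ n) (c : Fin n → Bool),
      Module.finrank ℂ ↥(suffixSpace n k (p + 1) c ⊓
        ⨅ j : Fin p, Module.End.eigenspace
          (JOp n k ⟨(j : ℕ), lt_of_lt_of_le j.2 hp⟩) (α (j : ℕ))) ≤ 1 := by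
  induction p with
  | zero =>
    intro hp c
    exact le_trans (Submodule.finrank_mono inf_le_left) (suffix_one_finrank c)
  | succ p ih =>
    intro hp c
    set pos : Fin n := ⟨p, lt_of_lt_of_le (Nat.lt_succ_self p) hp⟩ with hposdef
    have hp' : p ≤ n := Nat.le_of_succ_le hp
    set Rp : Submodule ℂ (JFun n k) := ⨅ j : Fin p, Module.End.eigenspace
      (JOp n k ⟨(j : ℕ), lt_of_lt_of_le j.2 hp'⟩) (α (j : ℕ)) with hRpdef
    set X : Submodule ℂ (JFun n k) := suffixSpace n k (p + 1 + 1) c ⊓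
      ⨅ j : Fin (p + 1), Module.End.eigenspace
        (JOp n k ⟨(j : ℕ), lt_of_lt_of_le j.2 hp⟩) (α (j : ℕ)) with hXdef
    show Module.finrank ℂ X ≤ 1
    set W : Bool → Submodule ℂ (JFun n k) := fun b =>
      suffixSpace n k (p + 1) (Function.update c pos b) ⊓ Rp with hWdef
    have hWrank : ∀ b, Module.finrank ℂ (W b) ≤ 1 := fun b =>
      ih hp' (Function.update c pos b)
    by_contra hcon
    push_neg at hcon
    have h2 : 2 ≤ Module.finrank ℂ X := hcon
    -- eigen equations for members of X
    have hNsub : ∀ v ∈ X, ∀ (j : Fin n), (j : ℕ) < p + 1 →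
        JOp n k j v = α (j : ℕ) • v := by
      intro v hv j hj
      have hv' := hv
      rw [hXdef, Submodule.mem_inf] at hv'
      have h3 := hv'.2
      rw [Submodule.mem_iInf] at h3
      have h4 := h3 ⟨(j : ℕ), hj⟩
      rw [Module.End.mem_eigenspace_iff] at h4
      exact h4
    -- support of members of X
    have hXsupp : ∀ v ∈ X, ∀ w : JWord n k,
        (¬ ∀ j : Fin n, pos < j → w.1 j = c j) → v w = 0 := by
      intro v hv w hw
      have hs1 : v ∈ suppSub (Sset n k (p + 1 + 1) c) := by
        rw [← suffixSpace_eq]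
        exact hv.1
      refine hs1 w ?_
      intro hmem
      refine hw fun j hj => hmem j ?_
      have : (pos : ℕ) < (j : ℕ) := hj
      simp only [hposdef] at this
      omega
    have hPbmem : ∀ v ∈ X, ∀ b, Pb pos b v ∈ W b := by
      intro v hv b
      simp only [hWdef]
      rw [Submodule.mem_inf]
      constructor
      · rw [suffixSpace_eq]
        intro w hw
        rw [Sset, Set.mem_setOf_eq] at hw
        push_neg at hw
        obtain ⟨j, hj1, hj2⟩ := hw
        rcases eq_or_ne j pos with rfl | hjne
        · rw [Function.update_self] at hj2
          rw [Pb_apply, if_neg hj2]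
        · rw [Function.update_of_ne hjne] at hj2
          have hjgt : pos < j := by
            have hval : (j : ℕ) ≠ (pos : ℕ) := fun hh => hjne (Fin.ext hh)
            have : (pos : ℕ) < (j : ℕ) := by
              simp only [hposdef] at hval ⊢
              omega
            exact this
          have hv0 : v w = 0 := hXsupp v hv w (by
            intro hall
            exact hj2 (hall j hjgt))
          rw [Pb_apply, hv0]
          split_ifs <;> rfl
      · rw [hRpdef, Submodule.mem_iInf]
        intro j
        rw [Module.End.mem_eigenspace_iff]
        have hjlt : (⟨(j : ℕ), lt_of_lt_of_le j.2 hp'⟩ : Fin n) < pos := by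
          simp only [hposdef, Fin.mk_lt_mk]
          exact j.2
        rw [← Pb_JOp_comm pos _ hjlt b v]
        rw [hNsub v hv _ (by simp only []; omega)]
        rw [map_smul]
    set L : JFun n k →ₗ[ℂ] JFun n k × JFun n k := (Pb pos false).prod (Pb pos true) with hLdef
    have hLinj : Function.Injective L := by
      intro v v' hvv
      have h0 : Pb pos false v = Pb pos false v' := congrArg Prod.fst hvv
      have h1 : Pb pos true v = Pb pos true v' := congrArg Prod.snd hvv
      rw [← Pb_add_Pb pos v, ← Pb_add_Pb pos v', h0, h1]
    have hmaple : X.map L ≤ (W false).prod (W true) := by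
      rintro _ ⟨v, hv, rfl⟩
      rw [Submodule.mem_prod]
      exact ⟨hPbmem v hv false, hPbmem v hv true⟩
    have hrankeq : Module.finrank ℂ X = Module.finrank ℂ (X.map L) :=
      (Submodule.equivMapOfInjective L hLinj X).finrank_eq
    have hprod : Module.finrank ℂ ((W false).prod (W true))
        = Module.finrank ℂ (W false) + Module.finrank ℂ (W true) :=
      finrank_prod_submodule _ _
    have hle2 : Module.finrank ℂ (X.map L) ≤ Module.finrank ℂ ((W false).prod (W true)) :=
      Submodule.finrank_mono hmaple
    have hW1 : Module.finrank ℂ (W false) = 1 ∧ Module.finrank ℂ (W true) = 1 := by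
      have := hWrank false
      have := hWrank true
      omega
    have heq : X.map L = (W false).prod (W true) :=
      Submodule.eq_of_le_of_finrank_le hmaple (by omega)
    -- extract u1 and u0
    have hWtne : W true ≠ ⊥ := by
      intro hb
      have := hW1.2
      rw [hb] at this
      rw [finrank_bot] at this
      omega
    have hWfne : W false ≠ ⊥ := by
      intro hb
      have := hW1.1
      rw [hb] at this
      rw [finrank_bot] at this
      omega
    obtain ⟨u1, hu1W, hu1ne⟩ := (Submodule.ne_bot_iff _).mp hWtne
    obtain ⟨u0, hu0W, hu0ne⟩ := (Submodule.ne_bot_iff _).mp hWfne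
    have hmem1 : ((0 : JFun n k), u1) ∈ (W false).prod (W true) :=
      Submodule.mem_prod.mpr ⟨Submodule.zero_mem _, hu1W⟩
    have hmem0 : (u0, (0 : JFun n k)) ∈ (W false).prod (W true) :=
      Submodule.mem_prod.mpr ⟨hu0W, Submodule.zero_mem _⟩
    rw [← heq] at hmem1 hmem0
    obtain ⟨v1, hv1X, hLv1⟩ := Submodule.mem_map.mp hmem1
    obtain ⟨v0, hv0X, hLv0⟩ := Submodule.mem_map.mp hmem0
    have hP10 : Pb pos false v1 = 0 := congrArg Prod.fst hLv1
    have hP11 : Pb pos true v1 = u1 := congrArg Prod.snd hLv1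
    have hP00 : Pb pos false v0 = u0 := congrArg Prod.fst hLv0
    have hP01 : Pb pos true v0 = 0 := congrArg Prod.snd hLv0
    have hveq1 : v1 = u1 := by rw [← Pb_add_Pb pos v1, hP10, hP11, zero_add]
    have hveq0 : v0 = u0 := by rw [← Pb_add_Pb pos v0, hP00, hP01, add_zero]
    have hpmem : ((pos : Fin n) : ℕ) < p + 1 := by
      simp only [hposdef]
      omega
    -- the J-eigen equation at pos for v1 and v0
    have hT1 := hNsub v1 hv1X pos hpmem
    have hT0 := hNsub v0 hv0X pos hpmem
    have H1 : ∀ w : JWord n k, w.1 pos = false →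
        ∑ l ∈ univ.filter (fun l => l < pos), u1 (permAct (Equiv.swap l pos) w) = 0 := by
      intro w hw
      have hvw : v1 w = 0 := by
        have h6 := congrFun hP10 w
        rw [Pb_apply, if_pos hw] at h6
        exact h6
      have h5 := congrFun hT1 w
      rw [JOp_apply] at h5
      rw [hveq1] at hvw
      rw [hveq1] at h5
      rw [Pi.smul_apply, hvw, smul_zero] at h5
      exact h5
    have H0 : ∀ w : JWord n k, w.1 pos = true →
        ∑ l ∈ univ.filter (fun l => l < pos), u0 (permAct (Equiv.swap l pos) w) = 0 := by
      intro w hw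
      have hvw : v0 w = 0 := by
        have h6 := congrFun hP01 w
        rw [Pb_apply, if_pos hw] at h6
        exact h6
      have h5 := congrFun hT0 w
      rw [JOp_apply] at h5
      rw [hveq0] at hvw
      rw [hveq0] at h5
      rw [Pi.smul_apply, hvw, smul_zero] at h5
      exact h5
    have hsupp1 : ∀ w : JWord n k,
        ¬ (w.1 pos = true ∧ ∀ j : Fin n, pos < j → w.1 j = c j) → u1 w = 0 := by
      intro w hw
      rw [← hP11, Pb_apply]
      by_cases hb : w.1 pos = true
      · rw [if_pos hb]
        have hnall : ¬ ∀ j : Fin n, pos < j → w.1 j = c j := fun hall => hw ⟨hb, hall⟩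
        exact hXsupp v1 hv1X w hnall
      · rw [if_neg hb]
    have hsupp0 : ∀ w : JWord n k,
        ¬ (w.1 pos = false ∧ ∀ j : Fin n, pos < j → w.1 j = c j) → u0 w = 0 := by
      intro w hw
      rw [← hP00, Pb_apply]
      by_cases hb : w.1 pos = false
      · rw [if_pos hb]
        have hnall : ¬ ∀ j : Fin n, pos < j → w.1 j = c j := fun hall => hw ⟨hb, hall⟩
        exact hXsupp v0 hv0X w hnall
      · rw [if_neg hb]
    by_cases hcase : 2 * k < 2 * sfxCnt pos c + 2 + p
    · refine hu1ne (block_vanish_true pos c u1 hsupp1 H1 fun m hm => ?_)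
      simp only [hposdef]
      omega
    · refine hu0ne (block_vanish_false pos c u0 hsupp0 H0 fun m hm => ?_)
      simp only [hposdef]
      omega


lemma finrank_sup_le_aux (A B : Submodule ℂ (JFun n k)) :
    Module.finrank ℂ ↥(A ⊔ B) ≤ Module.finrank ℂ A + Module.finrank ℂ B := by
  have h := Submodule.finrank_sup_add_finrank_inf_eq A B
  omega

lemma splitOnce (pos : Fin n) (c : Fin n → Bool) (R : Submodule ℂ (JFun n k))
    (hR : ∀ (b : Bool), ∀ v ∈ R, Pb pos b v ∈ R) :
    suffixSpace n k ((pos : ℕ) + 2) c ⊓ R ≤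
      (suffixSpace n k ((pos : ℕ) + 1) (Function.update c pos false) ⊓ R) ⊔
        (suffixSpace n k ((pos : ℕ) + 1) (Function.update c pos true) ⊓ R) := by
  intro v hv
  rw [Submodule.mem_inf] at hv
  have hsub : ∀ b, Pb pos b v ∈ suffixSpace n k ((pos : ℕ) + 1) (Function.update c pos b) := by
    intro b
    rw [suffixSpace_eq]
    intro w hw
    rw [Sset, Set.mem_setOf_eq] at hw
    push_neg at hw
    obtain ⟨j, hj1, hj2⟩ := hw
    rcases eq_or_ne j pos with rfl | hjne
    · rw [Function.update_self] at hj2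
      rw [Pb_apply, if_neg hj2]
    · rw [Function.update_of_ne hjne] at hj2
      have hgt : (pos : ℕ) + 2 ≤ (j : ℕ) + 1 := by
        have : (j : ℕ) ≠ (pos : ℕ) := fun hh => hjne (Fin.ext hh)
        omega
      have hv0 : v w = 0 := by
        have hss : v ∈ suppSub (Sset n k ((pos : ℕ) + 2) c) := by
          rw [← suffixSpace_eq]
          exact hv.1
        refine hss w ?_
        intro hmem
        exact hj2 (hmem j hgt)
      rw [Pb_apply, hv0]
      split_ifs <;> rfl
  rw [Submodule.mem_sup]
  exact ⟨Pb pos false v, Submodule.mem_inf.mpr ⟨hsub false, hR false v hv.2⟩,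
    Pb pos true v, Submodule.mem_inf.mpr ⟨hsub true, hR true v hv.2⟩, Pb_add_Pb pos v⟩

lemma Sset_mem_permAct_swap (q : ℕ) (c : Fin n → Bool) (a b : Fin n)
    (ha : ∀ j : Fin n, q ≤ (j : ℕ) + 1 → (j ≠ a ∧ j ≠ b)) (w : JWord n k) :
    permAct (Equiv.swap a b) w ∈ Sset n k q c ↔ w ∈ Sset n k q c := by
  constructor <;> intro h j hj
  · have h2 := h j hj
    rwa [permAct_swap_coe, Equiv.swap_apply_of_ne_of_ne (ha j hj).1 (ha j hj).2] at h2
  · rw [permAct_swap_coe, Equiv.swap_apply_of_ne_of_ne (ha j hj).1 (ha j hj).2]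
    exact h j hj

lemma JOp_swap_comm (t a b : Fin n) (hta : t < a) (htb : t < b) :
    (JOp n k t : Module.End ℂ (JFun n k)) * permOp (Equiv.swap a b)
      = permOp (Equiv.swap a b) * JOp n k t := by
  rw [JOp, Finset.sum_mul, Finset.mul_sum]
  refine Finset.sum_congr rfl fun l hl => ?_
  simp only [Finset.mem_filter, Finset.mem_univ, true_and] at hl
  rw [permOp_mul, permOp_mul]
  exact congrArg permOp (swap_mul_swap_disjoint
    (Ne.symm (ne_of_lt (lt_trans hl hta))) (Ne.symm (ne_of_lt hta))
    (Ne.symm (ne_of_lt (lt_trans hl htb))) (Ne.symm (ne_of_lt htb)))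

end JAux

open JAux

/-- For `1 ≤ i ≤ n - 1`, any standard Young tableau `λ_1 ↗ ⋯ ↗ λ_{i-1}` and any suffix
word `c_{i+2}…c_n`, the subspace `ℱ_{λ_1…λ_{i-1}}^{c_{i+2}…c_n}` has dimension at most
`4` and is invariant under both the transposition `s_i = (i, i+1)` and the Jucys-Murphy
operator `J_i` acting on `ℱ`. -/
theorem gt_suffix_subspace_dim_le_four_and_invariant
    (n k i : ℕ) (hi : 1 ≤ i) (hin : i ≤ n - 1) (c : Fin n → Bool)
    (μ : Fin ((i - 1) + 1) → YoungDiagram) (hμ : IsChainSYT (i - 1) μ) :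
    Module.finrank ℂ
        ↥(suffixSpace n k (i + 2) c ⊓ gtSpace n k (i - 1) (by omega) μ) ≤ 4 ∧
    (∀ v ∈ suffixSpace n k (i + 2) c ⊓ gtSpace n k (i - 1) (by omega) μ,
      permOp (Equiv.swap ⟨i - 1, by omega⟩ ⟨i, by omega⟩) v ∈
        suffixSpace n k (i + 2) c ⊓ gtSpace n k (i - 1) (by omega) μ) ∧
    (∀ v ∈ suffixSpace n k (i + 2) c ⊓ gtSpace n k (i - 1) (by omega) μ,
      JOp n k ⟨i - 1, by omega⟩ v ∈
        suffixSpace n k (i + 2) c ⊓ gtSpace n k (i - 1) (by omega) μ) := by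
    classical
  have hn2 : 2 ≤ n := by omega
  have hiltn : i < n := by omega
  have hin1n : i - 1 ≤ n := by omega
  set pii : Fin n := ⟨i, hiltn⟩ with hpidef
  set pi1 : Fin n := ⟨i - 1, by omega⟩ with hpi1def
  set α : ℕ → ℂ := fun t => if h : t < i - 1 then
    ((boxContent (μ (Fin.castSucc ⟨t, h⟩)) (μ (Fin.succ ⟨t, h⟩)) : ℤ) : ℂ) else 0 with hα
  set G : Submodule ℂ (JFun n k) := ⨅ j : Fin (i - 1),
    Module.End.eigenspace (JOp n k ⟨(j : ℕ), lt_of_lt_of_le j.2 hin1n⟩) (α (j : ℕ)) with hGdef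
  have hG : gtSpace n k (i - 1) (by omega) μ = G := by
    rw [gtSpace, hGdef]
    refine iInf_congr fun j => ?_
    have hval : α (j : ℕ) = ((boxContent (μ j.castSucc) (μ j.succ) : ℤ) : ℂ) := by
      rw [hα]
      dsimp only
      rw [dif_pos j.2]
    rw [hval]
  have hRpres : ∀ (pos : Fin n), (i - 1 : ℕ) ≤ (pos : ℕ) → ∀ (b : Bool),
      ∀ v ∈ G, Pb pos b v ∈ G := by
    intro pos hpos b v hv
    rw [hGdef, Submodule.mem_iInf] at hv ⊢
    intro j
    have h4 := hv j
    rw [Module.End.mem_eigenspace_iff] at h4 ⊢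
    have hlt : (⟨(j : ℕ), lt_of_lt_of_le j.2 hin1n⟩ : Fin n) < pos := by
      have hj2 := j.2
      show (j : ℕ) < (pos : ℕ)
      omega
    rw [← Pb_JOp_comm pos _ hlt b v, h4, map_smul]
  -- eigen-invariance helpers as vector statements
  have hGmem : ∀ v ∈ G, ∀ j : Fin (i - 1),
      JOp n k ⟨(j : ℕ), lt_of_lt_of_le j.2 hin1n⟩ v = α (j : ℕ) • v := by
    intro v hv j
    rw [hGdef, Submodule.mem_iInf] at hv
    have h4 := hv j
    rwa [Module.End.mem_eigenspace_iff] at h4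
  -- part 1
  have hstep2 : ∀ c' : Fin n → Bool,
      Module.finrank ℂ ↥(suffixSpace n k ((i - 1) + 2) c' ⊓ G) ≤ 2 := by
    intro c'
    have hsp := splitOnce pi1 c' G (fun b v hv => hRpres pi1 (le_refl _) b v hv)
    refine le_trans (Submodule.finrank_mono hsp) ?_
    refine le_trans (finrank_sup_le_aux _ _) ?_
    have hb := fun b => lemB (n := n) (k := k) (i - 1) α hin1n (Function.update c' pi1 b)
    exact add_le_add (hb false) (hb true)
  have hpart1 : Module.finrank ℂ ↥(suffixSpace n k (i + 2) c ⊓ G) ≤ 4 := by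
    have hsp := splitOnce pii c G
      (fun b v hv => hRpres pii (show i - 1 ≤ i by omega) b v hv)
    refine le_trans (Submodule.finrank_mono hsp) ?_
    refine le_trans (finrank_sup_le_aux _ _) ?_
    have h1 : Module.finrank ℂ
        ↥(suffixSpace n k ((pii : ℕ) + 1) (Function.update c pii false) ⊓ G) ≤ 2 := by
      rw [show ((pii : ℕ) + 1) = (i - 1) + 2 from by simp only [hpidef]; omega]
      exact hstep2 _
    have h2 : Module.finrank ℂ
        ↥(suffixSpace n k ((pii : ℕ) + 1) (Function.update c pii true) ⊓ G) ≤ 2 := by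
      rw [show ((pii : ℕ) + 1) = (i - 1) + 2 from by simp only [hpidef]; omega]
      exact hstep2 _
    exact le_trans (add_le_add h1 h2) (by norm_num)
  have hne12 : ∀ j : Fin n, i + 2 ≤ (j : ℕ) + 1 → (j ≠ pi1 ∧ j ≠ pii) := by
    intro j hj
    constructor
    · intro hh
      have := congrArg Fin.val hh
      simp only [hpi1def] at this
      omega
    · intro hh
      have := congrArg Fin.val hh
      simp only [hpidef] at this
      omega
  refine ⟨?_, ?_, ?_⟩
  · rw [hG]
    exact hpart1
  · -- invariance under the swap
    intro v hv
    rw [hG] at hv ⊢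
    rw [Submodule.mem_inf] at hv ⊢
    have hvs : v ∈ suppSub (Sset n k (i + 2) c) := by
      rw [← suffixSpace_eq]
      exact hv.1
    constructor
    · rw [suffixSpace_eq]
      intro w hw
      have : permOp (Equiv.swap pi1 pii) v w = v (permAct (Equiv.swap pi1 pii) w) :=
        permOp_swap_apply pi1 pii v w
      rw [this]
      refine hvs _ ?_
      intro hmem
      exact hw ((Sset_mem_permAct_swap (i + 2) c pi1 pii hne12 w).mp hmem)
    · rw [hGdef, Submodule.mem_iInf]
      intro j
      rw [Module.End.mem_eigenspace_iff]
      have hta : (⟨(j : ℕ), lt_of_lt_of_le j.2 hin1n⟩ : Fin n) < pi1 := by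
        have hj2 := j.2
        show (j : ℕ) < (pi1 : ℕ)
        simp only [hpi1def]
        omega
      have htb : (⟨(j : ℕ), lt_of_lt_of_le j.2 hin1n⟩ : Fin n) < pii := by
        have hj2 := j.2
        show (j : ℕ) < (pii : ℕ)
        simp only [hpidef]
        omega
      have hcomm := JOp_swap_comm (n := n) (k := k)
        ⟨(j : ℕ), lt_of_lt_of_le j.2 hin1n⟩ pi1 pii hta htb
      have happ := congrArg (fun (g : Module.End ℂ (JFun n k)) => g v) hcomm
      simp only [Module.End.mul_apply] at happ
      rw [happ, hGmem v hv.2 j, map_smul]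
  · -- invariance under the JM operator
    intro v hv
    rw [hG] at hv ⊢
    rw [Submodule.mem_inf] at hv ⊢
    have hvs : v ∈ suppSub (Sset n k (i + 2) c) := by
      rw [← suffixSpace_eq]
      exact hv.1
    constructor
    · rw [suffixSpace_eq]
      intro w hw
      rw [JOp_apply]
      refine Finset.sum_eq_zero fun l hl => ?_
      simp only [Finset.mem_filter, Finset.mem_univ, true_and] at hl
      refine hvs _ ?_
      intro hmem
      refine hw ((Sset_mem_permAct_swap (i + 2) c l pi1 ?_ w).mp hmem)
      intro j hj
      have hlv : (l : ℕ) < (pi1 : ℕ) := hl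
      constructor
      · intro hh
        have := congrArg Fin.val hh
        simp only [hpi1def] at this hlv
        omega
      · intro hh
        have := congrArg Fin.val hh
        simp only [hpi1def] at this
        omega
    · rw [hGdef, Submodule.mem_iInf]
      intro j
      rw [Module.End.mem_eigenspace_iff]
      have hta : (⟨(j : ℕ), lt_of_lt_of_le j.2 hin1n⟩ : Fin n) < pi1 := by
        have hj2 := j.2
        show (j : ℕ) < (pi1 : ℕ)
        simp only [hpi1def]
        omega
      have hcomm := JOp_mul_comm (n := n) (k := k)
        ⟨(j : ℕ), lt_of_lt_of_le j.2 hin1n⟩ pi1 hta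
      have happ := congrArg (fun (g : Module.End ℂ (JFun n k)) => g v) hcomm
      simp only [Module.End.mul_apply] at happ
      rw [happ, hGmem v hv.2 j, map_smul]
end
end
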